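/- arXiv:1112.0969 — 3 statements merged into one kernel-verified Lean document; each statement's English description precedes it below -/
import Mathlib

section
/- For any w ∈ I_*, the bar operator on M satisfies ‾(a_w) = ε_w · (T_{w⁻¹})⁻¹ · a_{w⁻¹}, where ε_w = (−1)^{l(w)}. -/
/-!
Statement 2 (Theorem 0.2(b)): for any `w ∈ I_*`,
`bar(a_w) = ε_w · (T_{w⁻¹})⁻¹ · a_{w⁻¹}` where `ε_w = (−1)^{l(w)}`.
-/

open LaurentPolynomial

/-- The ground ring `A = ℤ[u,u⁻¹]`. -/
noncomputable abbrev HeckeA : Type := LaurentPolynomial ℤ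

/-- The indeterminate `u ∈ ℤ[u,u⁻¹]`. -/
noncomputable def uA : HeckeA := LaurentPolynomial.T 1

lemma heckeA_T_inj {m n : ℤ} (h : (T m : HeckeA) = T n) : m = n := by
  by_contra hne
  have h2 := congrArg (fun f : LaurentPolynomial ℤ => f.coeff m) h
  simp only [T_apply, if_true, if_neg (fun hc : n = m => hne hc.symm)] at h2
  exact one_ne_zero h2

lemma heckeA_uA4_ne : (uA ^ 4 : HeckeA) ≠ uA ^ 2 := by
  intro h
  have h4 : (uA ^ 4 : HeckeA) = T 4 := by rw [show uA = T 1 from rfl, T_pow]; norm_num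
  have h2 : (uA ^ 2 : HeckeA) = T 2 := by rw [show uA = T 1 from rfl, T_pow]; norm_num
  rw [h4, h2] at h
  have := heckeA_T_inj h
  norm_num at this

lemma heckeA_une : ((T (-1) : HeckeA) + 1) ≠ 0 := by
  intro h
  have h1 : (T 1 : HeckeA) * (T (-1) + 1) = 0 := by rw [h, mul_zero]
  rw [mul_add, mul_one, ← T_add] at h1
  norm_num at h1
  rw [← Polynomial.toLaurent_X, ← Polynomial.toLaurent_one, ← map_add] at h1
  have h2 : (1 + Polynomial.X : Polynomial ℤ) = 0 :=
    Polynomial.toLaurent_injective (by simpa using h1)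
  have h3 := congrArg (fun p => Polynomial.coeff p 0) h2
  simp at h3

theorem statement2 {B W : Type} [Group W] {Mx : CoxeterMatrix B} (cs : CoxeterSystem Mx W)
    -- the automorphism `*` of `W`, with square 1, leaving `S` stable
    (star : W ≃* W) (hstar2 : ∀ w : W, star (star w) = w)
    (hstarS : ∀ i : B, ∃ j : B, star (cs.simple i) = cs.simple j)
    -- the Iwahori-Hecke algebra `H` of `(W,S)` over `A`, with basis `T w`
    (H : Type) [Ring H] [Algebra HeckeA H] (T : W → H)
    (hTbasis : ∃ bT : Module.Basis W HeckeA H, ∀ w : W, bT w = T w)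
    (hT1 : T 1 = 1)
    (hTmul : ∀ w w' : W, cs.length (w * w') = cs.length w + cs.length w' →
      T w * T w' = T (w * w'))
    (hTquad : ∀ i : B, (T (cs.simple i) + 1) *
      (T (cs.simple i) - algebraMap HeckeA H (uA ^ 2)) = 0)
    -- the free `A`-module `M` with basis `{a_w : w ∈ I_*}`
    (M : Type) [AddCommGroup M] [Module HeckeA M] (a : W → M)
    (haBasis : ∃ bA : Module.Basis {w : W // (star w)⁻¹ = w} HeckeA M, ∀ w, bA w = a w.1)
    -- the `H`-module structure on `M` of Theorem 0.1
    (act : H →ₐ[HeckeA] Module.End HeckeA M)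
    (hact : ∀ (i : B) (w : W), (star w)⁻¹ = w →
      ((cs.simple i * w = w * star (cs.simple i) ∧
          cs.length w < cs.length (cs.simple i * w) →
        act (T (cs.simple i)) (a w) = uA • a w + (uA + 1) • a (cs.simple i * w)) ∧
      (cs.simple i * w = w * star (cs.simple i) ∧
          cs.length (cs.simple i * w) < cs.length w →
        act (T (cs.simple i)) (a w) =
          (uA ^ 2 - uA - 1) • a w + (uA ^ 2 - uA) • a (cs.simple i * w)) ∧
      (cs.simple i * w ≠ w * star (cs.simple i) ∧
          cs.length w < cs.length (cs.simple i * w) →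
        act (T (cs.simple i)) (a w) = a (cs.simple i * w * star (cs.simple i))) ∧
      (cs.simple i * w ≠ w * star (cs.simple i) ∧
          cs.length (cs.simple i * w) < cs.length w →
        act (T (cs.simple i)) (a w) =
          (uA ^ 2 - 1) • a w + (uA ^ 2) • a (cs.simple i * w * star (cs.simple i)))))
    -- the bar involution of `H`: the ring homomorphism with
    -- `bar (uⁿ T_x) = u⁻ⁿ (T_{x⁻¹})⁻¹`, i.e. `bar (uⁿ T_x) * T_{x⁻¹} = u⁻ⁿ`
    (barH : H →+* H)
    (hbarH : ∀ (x : W) (n : ℤ),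
      barH (algebraMap HeckeA H (LaurentPolynomial.T n) * T x) * T x⁻¹ =
        algebraMap HeckeA H (LaurentPolynomial.T (-n)))
    -- the bar operator on `M` of Theorem 0.2(a)
    (barM : M →ₗ[ℤ] M)
    (hbarAct : ∀ (h : H) (m : M), barM (act h m) = act (barH h) (barM m))
    (hbar1 : barM (a 1) = a 1) :
    -- `bar(a_w) = ε_w (T_{w⁻¹})⁻¹ a_{w⁻¹}` for all `w ∈ I_*`
    ∀ w : W, (star w)⁻¹ = w →
      barM (a w) = ((-1 : ℤ) ^ cs.length w) • act (Ring.inverse (T w⁻¹)) (a w⁻¹) := by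
  classical
  obtain ⟨bA, hbA⟩ := haBasis
  have huA : uA = LaurentPolynomial.T 1 := rfl
  -- act of scalars
  have hsmul : ∀ (p : HeckeA) (m : M), act (algebraMap HeckeA H p) m = p • m := by
    intro p m
    rw [AlgHom.commutes]
    rfl
  -- composition helper
  have hcomp : ∀ (x y : H) (m : M), act x (act y m) = act (x * y) m := by
    intro x y m
    rw [map_mul]
    rfl
  -- smul cancellation
  have hsmul0 : ∀ (c : HeckeA), c ≠ 0 → ∀ m : M, c • m = 0 → m = 0 := by
    intro c hc m hm
    have h1 : c • bA.repr m = 0 := by rw [← map_smul, hm, map_zero]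
    have h2 : bA.repr m = 0 := by
      apply Finsupp.ext
      intro x
      have h3 := DFunLike.congr_fun h1 x
      rw [Finsupp.smul_apply, Finsupp.zero_apply, smul_eq_mul] at h3
      rw [Finsupp.zero_apply]
      rcases mul_eq_zero.mp h3 with h | h
      · exact absurd h hc
      · exact h
    have := bA.repr.map_eq_zero_iff.mp h2
    exact this
  -- star preserves length
  have hlstar : ∀ x : W, cs.length (star x) = cs.length x := by
    have key : ∀ ω : List B, star (cs.wordProd ω) =
        cs.wordProd (ω.map fun i => Classical.choose (hstarS i)) := by
      intro ω
      induction ω with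
      | nil => simp [cs.wordProd_nil]
      | cons i ω ihw =>
        rw [cs.wordProd_cons, map_mul, ihw, List.map_cons, cs.wordProd_cons]
        exact congrArg (fun z => z * _) (Classical.choose_spec (hstarS i))
    have hle : ∀ x : W, cs.length (star x) ≤ cs.length x := by
      intro x
      obtain ⟨ω, hlen, hprod⟩ := cs.exists_reduced_word x
      rw [hprod, key]
      calc cs.length (cs.wordProd (ω.map fun i => Classical.choose (hstarS i)))
          ≤ (ω.map fun i => Classical.choose (hstarS i)).length := cs.length_wordProd_le _
        _ = ω.length := List.length_map _
        _ = cs.length (cs.wordProd ω) := by rw [hlen]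
    intro x
    refine le_antisymm (hle x) ?_
    have h2 := hle (star x)
    rwa [hstar2 x] at h2
  -- units of simple T's
  have hTs_unit : ∀ i : B, IsUnit (T (cs.simple i)) := by
    intro i
    have hq := hTquad i
    set c := algebraMap HeckeA H (uA ^ 2) with hc
    have hcomm : T (cs.simple i) * c = c * T (cs.simple i) := (Algebra.commutes _ _).symm
    have hid1 : (T (cs.simple i) + 1) * (T (cs.simple i) - c) =
        T (cs.simple i) * (T (cs.simple i) + 1 - c) - c := by noncomm_ring
    rw [hid1] at hq
    have h1 : T (cs.simple i) * (T (cs.simple i) + 1 - c) = c := sub_eq_zero.mp hq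
    have hid2 : (T (cs.simple i) + 1 - c) * T (cs.simple i) =
        T (cs.simple i) * (T (cs.simple i) + 1 - c) + (T (cs.simple i) * c - c * T (cs.simple i)) := by
      noncomm_ring
    have h2 : (T (cs.simple i) + 1 - c) * T (cs.simple i) = c := by
      rw [hid2, hcomm, sub_self, add_zero, h1]
    have hA : (uA ^ 2 : HeckeA) * LaurentPolynomial.T (-2) = 1 := by
      rw [huA, T_pow, ← T_add]; norm_num
    have hcc' : c * algebraMap HeckeA H (LaurentPolynomial.T (-2)) = 1 := by
      rw [hc, ← map_mul, hA, map_one]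
    refine isUnit_iff_exists.mpr
      ⟨(T (cs.simple i) + 1 - c) * algebraMap HeckeA H (LaurentPolynomial.T (-2)), ?_, ?_⟩
    · rw [← mul_assoc, h1, hcc']
    · rw [mul_assoc, Algebra.commutes, ← mul_assoc, h2, hcc']
  -- units of all T's
  have hT_unit : ∀ n : ℕ, ∀ x : W, cs.length x = n → IsUnit (T x) := by
    intro n
    induction n using Nat.strong_induction_on with
    | _ n ihn =>
      intro x hx
      rcases eq_or_ne x 1 with rfl | hx1
      · rw [hT1]; exact isUnit_one
      · obtain ⟨i, hi⟩ := cs.exists_leftDescent_of_ne_one hx1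
        have hlen : cs.length (cs.simple i * x) + 1 = cs.length x := cs.isLeftDescent_iff.mp hi
        have hmul : T (cs.simple i) * T (cs.simple i * x) = T x := by
          have h := hTmul (cs.simple i) (cs.simple i * x) (by
            rw [cs.simple_mul_simple_cancel_left, cs.length_simple]; omega)
          rwa [cs.simple_mul_simple_cancel_left] at h
        rw [← hmul]
        exact (hTs_unit i).mul (ihn (cs.length (cs.simple i * x)) (by omega) _ rfl)
  have hT_unit' : ∀ x : W, IsUnit (T x) := fun x => hT_unit (cs.length x) x rfl
  -- bar of T
  have hbarT : ∀ x : W, barH (T x) * T x⁻¹ = 1 := by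
    intro x
    have h := hbarH x 0
    rwa [neg_zero, T_zero, map_one, one_mul] at h
  have hflip : ∀ x y : H, IsUnit x → y * x = 1 → x * y = 1 := by
    intro x y hx hyx
    obtain ⟨v, hv1, hv2⟩ := isUnit_iff_exists.mp hx
    have hy : y = v := by rw [← one_mul v, ← hyx, mul_assoc, hv1, mul_one]
    rw [hy, hv1]
  have hbarTs : ∀ i : B, T (cs.simple i) * barH (T (cs.simple i)) = 1 := by
    intro i
    refine hflip _ _ (hTs_unit i) ?_
    have h := hbarT (cs.simple i)
    rwa [cs.inv_simple] at h
  -- bar of scalars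
  have hbaralg : ∀ n : ℤ, barH (algebraMap HeckeA H (LaurentPolynomial.T n)) =
      algebraMap HeckeA H (LaurentPolynomial.T (-n)) := by
    intro n
    have h := hbarH 1 n
    rwa [hT1, mul_one, inv_one, hT1, mul_one] at h
  have hbarsmul : ∀ (n : ℤ) (m : M),
      barM ((LaurentPolynomial.T n : HeckeA) • m) = (LaurentPolynomial.T (-n) : HeckeA) • barM m := by
    intro n m
    rw [← hsmul, hbarAct, hbaralg, hsmul]
  -- main induction
  have main : ∀ n : ℕ, ∀ w : W, (star w)⁻¹ = w → cs.length w = n →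
      act (T w⁻¹) (barM (a w)) = ((-1 : ℤ) ^ cs.length w) • a w⁻¹ := by
    intro n
    induction n using Nat.strong_induction_on with
    | _ n ih =>
    intro w hw hlw
    rcases eq_or_ne w 1 with rfl | hw1
    · simp [hT1, hbar1, map_one, Module.End.one_apply]
    · obtain ⟨i, hi⟩ := cs.exists_leftDescent_of_ne_one hw1
      obtain ⟨j, hj⟩ := hstarS i
      have hstar_sj : star (cs.simple j) = cs.simple i := by rw [← hj, hstar2]
      have hsw : star w = w⁻¹ := by
        have h := congrArg Inv.inv hw
        rwa [inv_inv] at h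
      have hlsw : cs.length (cs.simple i * w) + 1 = cs.length w := cs.isLeftDescent_iff.mp hi
      by_cases hcase : cs.simple i * w = w * cs.simple j
      · -- Case A : si * w = w * sj
        obtain ⟨v, hv⟩ : ∃ v : W, v = cs.simple i * w := ⟨_, rfl⟩
        have hsiv : cs.simple i * v = w := by
          rw [hv, cs.simple_mul_simple_cancel_left]
        have hvsj : v * cs.simple j = w := by
          rw [hv, hcase, cs.simple_mul_simple_cancel_right]
        have hvI : (star v)⁻¹ = v := by
          rw [hv, map_mul, hj, hsw, mul_inv_rev, inv_inv, cs.inv_simple]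
          exact hcase.symm
        have hvinvI : (star v⁻¹)⁻¹ = v⁻¹ := by
          have h := congrArg Inv.inv hvI
          rw [inv_inv] at h
          rw [map_inv, h, inv_inv]
        have hwinv1 : w⁻¹ = v⁻¹ * cs.simple i := by
          rw [← hsiv, mul_inv_rev, cs.inv_simple]
        have hwinv2 : w⁻¹ = cs.simple j * v⁻¹ := by
          rw [← hvsj, mul_inv_rev, cs.inv_simple]
        have hlv : cs.length v + 1 = cs.length w := by rw [hv]; exact hlsw
        -- module relations
        have hrel1 : act (T (cs.simple i)) (a v) = uA • a v + (uA + 1) • a w := by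
          have h := (hact i v hvI).1 ⟨by rw [hj, hsiv, hvsj], by rw [hsiv]; omega⟩
          rwa [hsiv] at h
        have hrel2 : act (T (cs.simple j)) (a v⁻¹) = uA • a v⁻¹ + (uA + 1) • a w⁻¹ := by
          have h := (hact j v⁻¹ hvinvI).1 ⟨by rw [hstar_sj, ← hwinv2, ← hwinv1], by
            rw [← hwinv2, cs.length_inv, cs.length_inv]; omega⟩
          rwa [← hwinv2] at h
        -- Hecke products
        have hTprod1 : T v⁻¹ * T (cs.simple i) = T w⁻¹ := by
          have hl : cs.length (v⁻¹ * cs.simple i) = cs.length v⁻¹ + cs.length (cs.simple i) := by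
            rw [← hwinv1, cs.length_inv, cs.length_inv, cs.length_simple]; omega
          rw [hTmul v⁻¹ (cs.simple i) hl, ← hwinv1]
        have hTprod2 : T (cs.simple j) * T v⁻¹ = T w⁻¹ := by
          have hl : cs.length (cs.simple j * v⁻¹) = cs.length (cs.simple j) + cs.length v⁻¹ := by
            rw [← hwinv2, cs.length_inv, cs.length_simple, cs.length_inv]; omega
          rw [hTmul _ _ hl, ← hwinv2]
        have hprodinv : T w⁻¹ * barH (T (cs.simple i)) = T v⁻¹ := by
          rw [← hTprod1, mul_assoc, hbarTs i, mul_one]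
        have ihv : act (T v⁻¹) (barM (a v)) = ((-1 : ℤ) ^ cs.length v) • a v⁻¹ :=
          ih (cs.length v) (by omega) v hvI rfl
        -- bar the relation
        have e1 : act (barH (T (cs.simple i))) (barM (a v)) =
            (LaurentPolynomial.T (-1) : HeckeA) • barM (a v) +
              ((LaurentPolynomial.T (-1) : HeckeA) • barM (a w) + barM (a w)) := by
          have h := congrArg barM hrel1
          rw [hbarAct] at h
          rw [h, huA, add_smul, one_smul, map_add, map_add, hbarsmul 1, hbarsmul 1]
        have e4 : act (T w⁻¹) (act (barH (T (cs.simple i))) (barM (a v))) =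
            ((-1 : ℤ) ^ cs.length v) • a v⁻¹ := by
          rw [hcomp, hprodinv, ihv]
        have e5 : act (T w⁻¹) (barM (a v)) =
            ((-1 : ℤ) ^ cs.length v) • (uA • a v⁻¹ + (uA + 1) • a w⁻¹) := by
          have h : act (T w⁻¹) (barM (a v)) = act (T (cs.simple j)) (act (T v⁻¹) (barM (a v))) := by
            rw [hcomp, hTprod2]
          rw [h, ihv, map_zsmul, hrel2]
        have E : ((-1 : ℤ) ^ cs.length v) • a v⁻¹ =
            (LaurentPolynomial.T (-1) : HeckeA) •
                (((-1 : ℤ) ^ cs.length v) • (uA • a v⁻¹ + (uA + 1) • a w⁻¹)) +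
              ((LaurentPolynomial.T (-1) : HeckeA) • act (T w⁻¹) (barM (a w)) +
                act (T w⁻¹) (barM (a w))) := by
          rw [← e4, e1, map_add, map_add, map_smul, map_smul, e5]
        have hTT : (LaurentPolynomial.T (-1) : HeckeA) * uA = 1 := by
          rw [huA, ← T_add]; norm_num
        have hhelp : (LaurentPolynomial.T (-1) : HeckeA) •
              (((-1 : ℤ) ^ cs.length v) • (uA • a v⁻¹ + (uA + 1) • a w⁻¹)) =
            ((-1 : ℤ) ^ cs.length v) • a v⁻¹ +
              ((LaurentPolynomial.T (-1) : HeckeA) + 1) •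
                (((-1 : ℤ) ^ cs.length v) • a w⁻¹) := by
          rw [smul_comm, smul_add, smul_smul, smul_smul, hTT, mul_add, hTT, mul_one, one_smul,
            smul_add, smul_comm ((-1 : ℤ) ^ cs.length v)]
          rw [add_comm (1 : HeckeA) (LaurentPolynomial.T (-1))]
        have heq0 : ((LaurentPolynomial.T (-1) : HeckeA) + 1) •
            (act (T w⁻¹) (barM (a w)) + ((-1 : ℤ) ^ cs.length v) • a w⁻¹) = 0 := by
          rw [hhelp] at E
          have h4 : ((LaurentPolynomial.T (-1) : HeckeA) + 1) •
              (act (T w⁻¹) (barM (a w)) + ((-1 : ℤ) ^ cs.length v) • a w⁻¹) =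
              (((-1 : ℤ) ^ cs.length v) • a v⁻¹ +
                ((LaurentPolynomial.T (-1) : HeckeA) + 1) •
                  (((-1 : ℤ) ^ cs.length v) • a w⁻¹) +
                ((LaurentPolynomial.T (-1) : HeckeA) • act (T w⁻¹) (barM (a w)) +
                  act (T w⁻¹) (barM (a w)))) -
                ((-1 : ℤ) ^ cs.length v) • a v⁻¹ := by
            module
          rw [h4, ← E, sub_self]
        have hX : act (T w⁻¹) (barM (a w)) = -(((-1 : ℤ) ^ cs.length v) • a w⁻¹) :=
          eq_neg_of_add_eq_zero_left (hsmul0 _ heckeA_une _ heq0)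
        rw [hX, ← hlv, pow_succ]
        module
      · -- Case B : si * w ≠ w * sj
        have hlwsj : cs.length (w * cs.simple j) = cs.length (cs.simple i * w) := by
          have h1 : star (cs.simple j * w⁻¹) = cs.simple i * w := by
            rw [map_mul, hstar_sj, map_inv, hsw, inv_inv]
          rw [← cs.length_inv (w * cs.simple j), mul_inv_rev, cs.inv_simple,
            ← hlstar (cs.simple j * w⁻¹), h1]
        obtain ⟨v, hv⟩ : ∃ v : W, v = cs.simple i * w * cs.simple j := ⟨_, rfl⟩
        have hvI : (star v)⁻¹ = v := by
          rw [hv, map_mul, map_mul, hj, hstar_sj, hsw, mul_inv_rev, mul_inv_rev, inv_inv,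
            cs.inv_simple, cs.inv_simple]
          exact (mul_assoc _ _ _).symm
        have hvinvI : (star v⁻¹)⁻¹ = v⁻¹ := by
          have h := congrArg Inv.inv hvI
          rw [inv_inv] at h
          rw [map_inv, h, inv_inv]
        have hsivB : cs.simple i * v = w * cs.simple j := by
          rw [hv]
          rw [← mul_assoc, ← mul_assoc, cs.simple_mul_simple_self, one_mul]
        have hvsjB : v * cs.simple j = cs.simple i * w := by
          rw [hv, cs.simple_mul_simple_cancel_right]
        have hsvsB : cs.simple i * v * cs.simple j = w := by
          rw [hsivB, cs.simple_mul_simple_cancel_right]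
        have hl2 := cs.length_simple_mul (w * cs.simple j) i
        rw [show cs.simple i * (w * cs.simple j) = v from by rw [hv, mul_assoc]] at hl2
        rcases hl2 with hup | hdn
        · -- contradiction branch : length goes up
          exfalso
          have hlv_eq : cs.length v = cs.length w := by omega
          have hr_w : act (T (cs.simple i)) (a w) = (uA ^ 2 - 1) • a w + uA ^ 2 • a v := by
            have h := (hact i w hw).2.2.2 ⟨by rw [hj]; exact hcase, by omega⟩
            rw [hj] at h
            rwa [← hv] at h
          have hr_v : act (T (cs.simple i)) (a v) = (uA ^ 2 - 1) • a v + uA ^ 2 • a w := by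
            have h := (hact i v hvI).2.2.2 ⟨by
                rw [hj, hsivB, hvsjB]; exact fun hh => hcase hh.symm, by
                rw [hsivB]; omega⟩
            rwa [hj, hsvsB] at h
          have hTsq : T (cs.simple i) * T (cs.simple i) =
              algebraMap HeckeA H (uA ^ 2) * T (cs.simple i) - T (cs.simple i) +
                algebraMap HeckeA H (uA ^ 2) := by
            have hq := hTquad i
            have hcomm : T (cs.simple i) * algebraMap HeckeA H (uA ^ 2) =
                algebraMap HeckeA H (uA ^ 2) * T (cs.simple i) := (Algebra.commutes _ _).symm
            have hid : (T (cs.simple i) + 1) * (T (cs.simple i) - algebraMap HeckeA H (uA ^ 2)) =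
                T (cs.simple i) * T (cs.simple i) -
                  (algebraMap HeckeA H (uA ^ 2) * T (cs.simple i) - T (cs.simple i) +
                    algebraMap HeckeA H (uA ^ 2)) +
                  (algebraMap HeckeA H (uA ^ 2) * T (cs.simple i) -
                    T (cs.simple i) * algebraMap HeckeA H (uA ^ 2)) := by noncomm_ring
            rw [hid, hcomm, sub_self, add_zero] at hq
            exact sub_eq_zero.mp hq
          have hq1 : act (T (cs.simple i)) (act (T (cs.simple i)) (a w)) =
              uA ^ 2 • act (T (cs.simple i)) (a w) - act (T (cs.simple i)) (a w) +
                uA ^ 2 • a w := by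
            rw [hcomp, hTsq]
            simp only [map_add, map_sub, map_mul, LinearMap.add_apply, LinearMap.sub_apply,
              Module.End.mul_apply, hsmul]
          rw [hr_w, map_add, map_smul, map_smul, hr_w, hr_v] at hq1
          have hvw : v ≠ w := by
            intro he
            apply hcase
            have h2 : v * cs.simple j = w * cs.simple j := by rw [he]
            rwa [hvsjB] at h2
          have haw : a w = bA ⟨w, hw⟩ := (hbA ⟨w, hw⟩).symm
          have hav : a v = bA ⟨v, hvI⟩ := (hbA ⟨v, hvI⟩).symm
          rw [haw, hav] at hq1
          have hvwS : (⟨v, hvI⟩ : {x : W // (star x)⁻¹ = x}) ≠ ⟨w, hw⟩ :=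
            fun hh => hvw (congrArg Subtype.val hh)
          have hc := congrArg (fun m => bA.coord ⟨w, hw⟩ m) hq1
          simp only [map_add, map_sub, map_smul, Module.Basis.coord_apply, Module.Basis.repr_self_apply,
            smul_eq_mul, eq_self_iff_true, if_true, if_neg hvwS] at hc
          have h42 : (uA ^ 4 : HeckeA) = uA ^ 2 := by linear_combination hc
          exact heckeA_uA4_ne h42
        · -- genuine case B : length goes down by 2
          have hlv2 : cs.length v + 2 = cs.length w := by omega
          have hrelB1 : act (T (cs.simple i)) (a v) = a w := by
            have h := (hact i v hvI).2.2.1 ⟨by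
                rw [hj, hsivB, hvsjB]; exact fun hh => hcase hh.symm, by
                rw [hsivB]; omega⟩
            rwa [hj, hsvsB] at h
          -- inverse decompositions
          have hwinvB1 : w⁻¹ = cs.simple j * (v⁻¹ * cs.simple i) := by
            have h := congrArg Inv.inv hsvsB
            rw [mul_inv_rev, mul_inv_rev, cs.inv_simple, cs.inv_simple] at h
            exact h.symm
          have hsjv : w⁻¹ * cs.simple i = cs.simple j * v⁻¹ := by
            rw [hwinvB1, mul_assoc, cs.simple_mul_simple_cancel_right]
          have hdecomp : cs.simple j * v⁻¹ * cs.simple i = w⁻¹ := by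
            rw [← hsjv, cs.simple_mul_simple_cancel_right]
          have hsjvinv : (cs.simple j * v⁻¹)⁻¹ = cs.simple i * w := by
            rw [mul_inv_rev, inv_inv, cs.inv_simple, hvsjB]
          have hlsjv : cs.length (cs.simple j * v⁻¹) = cs.length v + 1 := by
            rw [← cs.length_inv, hsjvinv]; omega
          have hrelB2 : act (T (cs.simple j)) (a v⁻¹) = a w⁻¹ := by
            have h := (hact j v⁻¹ hvinvI).2.2.1 ⟨by
                rw [hstar_sj]
                intro h'
                apply hcase
                have h'' := congrArg Inv.inv h'
                rw [mul_inv_rev, mul_inv_rev, inv_inv, cs.inv_simple,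
                  cs.inv_simple] at h''
                rw [hvsjB, hsivB] at h''
                exact h'', by
                rw [hlsjv, cs.length_inv]; omega⟩
            rwa [hstar_sj, hdecomp] at h
          have hTpB3 : T (cs.simple j) * T v⁻¹ = T (cs.simple j * v⁻¹) :=
            hTmul _ _ (by rw [hlsjv, cs.length_simple, cs.length_inv]; omega)
          have hTpB2 : T (cs.simple j * v⁻¹) * T (cs.simple i) = T w⁻¹ := by
            have hl : cs.length (cs.simple j * v⁻¹ * cs.simple i) =
                cs.length (cs.simple j * v⁻¹) + cs.length (cs.simple i) := by
              rw [hdecomp, cs.length_inv, hlsjv, cs.length_simple]; omega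
            rw [hTmul _ _ hl, hdecomp]
          have hprodinvB : T w⁻¹ * barH (T (cs.simple i)) = T (cs.simple j) * T v⁻¹ := by
            rw [← hTpB2, mul_assoc, hbarTs i, mul_one]
            exact hTpB3.symm
          have ihv : act (T v⁻¹) (barM (a v)) = ((-1 : ℤ) ^ cs.length v) • a v⁻¹ :=
            ih (cs.length v) (by omega) v hvI rfl
          have hbw : barM (a w) = act (barH (T (cs.simple i))) (barM (a v)) := by
            rw [← hrelB1, hbarAct]
          calc act (T w⁻¹) (barM (a w))
              = act (T w⁻¹) (act (barH (T (cs.simple i))) (barM (a v))) := by rw [hbw]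
            _ = act (T (cs.simple j)) (act (T v⁻¹) (barM (a v))) := by
                rw [hcomp, hprodinvB, ← hcomp]
            _ = ((-1 : ℤ) ^ cs.length v) • a w⁻¹ := by rw [ihv, map_zsmul, hrelB2]
            _ = ((-1 : ℤ) ^ cs.length w) • a w⁻¹ := by rw [← hlv2, pow_add]; norm_num
  -- conclude
  intro w hw
  have key := main (cs.length w) w hw rfl
  have hu : IsUnit (T w⁻¹) := hT_unit' w⁻¹
  have h1 : Ring.inverse (T w⁻¹) * T w⁻¹ = 1 := Ring.inverse_mul_cancel _ hu
  have h2 := congrArg (fun m => act (Ring.inverse (T w⁻¹)) m) key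
  rw [hcomp, h1, map_one] at h2
  simp only [Module.End.one_apply] at h2
  rw [map_zsmul] at h2
  exact h2
end

section
/- Let Ω ∈ I^K_*, let x ∈ I_* ∩ Ω and let b = b_Ω be the unique element of minimal length of Ω. Then there exists a sequence x = x_0, x_1, …, x_n = b in I_* ∩ Ω and a sequence s_1, s_2, …, s_n in S such that for every i ∈ {1,…,n} we have x_i = s_i • x_{i−1}. -/
open LaurentPolynomial
open scoped Classical

/-- The ground ring `Ā = ℤ[v,v⁻¹]`; we regard `A = ℤ[u,u⁻¹]` as a subring via `u = v²`,
so that `u = LaurentPolynomial.T 2` and `v = LaurentPolynomial.T 1`. -/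
noncomputable abbrev Av : Type := LaurentPolynomial ℤ

/-- The Bruhat order on a Coxeter group: `x ≤ y` iff there is a chain from `x` to `y`
obtained by multiplying by reflections, increasing the length at each step. -/
def BruhatLE {B W : Type} [Group W] {Mx : CoxeterMatrix B} (cs : CoxeterSystem Mx W)
    (x y : W) : Prop :=
  Relation.ReflTransGen
    (fun a b => (∃ t, cs.IsReflection t ∧ b = a * t) ∧ cs.length a < cs.length b) x y

open List CoxeterSystem

namespace St10

variable {B W : Type} [Group W] {Mx : CoxeterMatrix B} (cs : CoxeterSystem Mx W)

local prefix:100 "s" => cs.simple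
local prefix:100 "π" => cs.wordProd
local prefix:100 "ℓ" => cs.length

/-- The sign permutation associated to a simple reflection. -/
noncomputable def fperm (i : B) : Equiv.Perm (W × ℤˣ) :=
  Function.Involutive.toPerm
    (fun p => (s i * p.1 * s i, (if p.1 = s i then -1 else 1) * p.2))
    (by
      rintro ⟨t, e⟩
      by_cases h : t = s i
      · simp [h, cs.simple_mul_simple_cancel_right, cs.simple_mul_simple_cancel_left]
      · have h2 : s i * t * s i ≠ s i := by
          intro hc
          apply h
          have := congrArg (fun z => s i * z * s i) hc
          symm
          simpa [mul_assoc, cs.simple_mul_simple_cancel_left,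
            cs.simple_mul_simple_cancel_right] using this.symm
        simp only [if_neg h2, if_neg h, one_mul]
        refine Prod.ext ?_ rfl
        show s i * (s i * t * s i) * s i = t
        simp [mul_assoc, cs.simple_mul_simple_cancel_left])

lemma fperm_apply (i : B) (p : W × ℤˣ) :
    fperm cs i p = (s i * p.1 * s i, (if p.1 = s i then -1 else 1) * p.2) := rfl

/-- The sign of `t` with respect to the right inversion sequence of `ω`. -/
noncomputable def sgn (ω : List B) (t : W) : ℤˣ :=
  ((cs.rightInvSeq ω).map (fun u => if t = u then (-1 : ℤˣ) else 1)).prod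

lemma sgn_nil (t : W) : sgn cs [] t = 1 := rfl

lemma sgn_cons (i : B) (α : List B) (t : W) :
    sgn cs (i :: α) t =
      (if t = (π α)⁻¹ * s i * π α then (-1 : ℤˣ) else 1) * sgn cs α t := by
  simp [sgn, rightInvSeq]

lemma sgn_eq_one_of_not_mem (ω : List B) (t : W) (h : t ∉ cs.rightInvSeq ω) :
    sgn cs ω t = 1 := by
  apply List.prod_eq_one
  intro x hx
  obtain ⟨u, hu, rfl⟩ := List.mem_map.mp hx
  rw [if_neg]
  rintro rfl
  exact h hu

lemma prod_map_fperm (ω : List B) (p : W × ℤˣ) :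
    ((ω.map (fperm cs)).prod) p =
      (π ω * p.1 * (π ω)⁻¹, sgn cs ω p.1 * p.2) := by
  induction ω generalizing p with
  | nil => simp [sgn_nil]
  | cons i α ih =>
    rw [List.map_cons, List.prod_cons, Equiv.Perm.mul_apply, ih, fperm_apply]
    rw [sgn_cons, cs.wordProd_cons]
    have hcond : (π α * p.1 * (π α)⁻¹ = s i) ↔ (p.1 = (π α)⁻¹ * s i * π α) := by
      constructor
      · intro h; rw [← h]; group
      · intro h; rw [h]; group
    refine Prod.ext ?_ ?_
    · show s i * (π α * p.1 * (π α)⁻¹) * s i = s i * π α * p.1 * (s i * π α)⁻¹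
      rw [mul_inv_rev, cs.inv_simple]
      group
    · show (if π α * p.1 * (π α)⁻¹ = s i then (-1:ℤˣ) else 1) * (sgn cs α p.1 * p.2) =
        (if p.1 = (π α)⁻¹ * s i * π α then (-1:ℤˣ) else 1) * sgn cs α p.1 * p.2
      by_cases h : p.1 = (π α)⁻¹ * s i * π α
      · rw [if_pos (hcond.mpr h), if_pos h]; rw [mul_assoc]
      · rw [if_neg (fun hc => h (hcond.mp hc)), if_neg h]; rw [mul_assoc]


lemma aw_two_mul_succ (i j : B) (m : ℕ) :
    alternatingWord i j (2 * (m + 1)) = i :: j :: alternatingWord i j (2 * m) := by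
  have h1 : 2 * (m + 1) = (2 * m + 1) + 1 := by omega
  rw [h1, alternatingWord_succ' i j (2 * m + 1), alternatingWord_succ' i j (2 * m)]
  have h2 : ¬ Even (2 * m + 1) := by simp [Nat.even_add_one]
  have h3 : Even (2 * m) := even_two_mul m
  rw [if_neg h2, if_pos h3]

lemma drop_alternatingWord (i j : B) (n : ℕ) : ∀ c ≤ n,
    (alternatingWord i j n).drop c = alternatingWord i j (n - c) := by
  induction n with
  | zero => intro c hc; interval_cases c; simp
  | succ n ih =>
    intro c hc
    cases c with
    | zero => simp
    | succ c =>
      rw [alternatingWord_succ', List.drop_succ_cons, ih c (by omega)]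
      congr 1
      omega

lemma conj_pow_invol {t e : W} (ht : t * t = 1) (a : ℕ) :
    t * e ^ a * t = (t * e * t) ^ a := by
  induction a with
  | zero => simpa using ht
  | succ a ih =>
    rw [pow_succ, pow_succ, ← ih]
    have h2 : (t * e ^ a * t) * (t * e * t) = t * e ^ a * (t * t) * e * t := by group
    rw [h2, ht, mul_one]
    group

lemma wordProd_aw_add (i j : B) (r : ℕ) :
    π (alternatingWord i j (Mx i j + r)) =
      π (alternatingWord i j (Mx i j)) * π (alternatingWord i j r) := by
  have he : (s i * s j) ^ (Mx i j) = 1 := cs.simple_mul_simple_pow i j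
  set m := Mx i j with hm
  set e := s i * s j with hedef
  have htt : s j * s j = 1 := cs.simple_mul_simple_self j
  have hte : s j * e * s j = e⁻¹ := by
    rw [hedef, mul_inv_rev, cs.inv_simple, cs.inv_simple]
    rw [← mul_assoc, mul_assoc (s j * s i)]
    simp [mul_assoc, htt]
  have hconj : ∀ a : ℕ, s j * e ^ a * s j = (e ^ a)⁻¹ := by
    intro a
    rw [conj_pow_invol htt, hte, inv_pow]
  rw [prod_alternatingWord_eq_mul_pow, prod_alternatingWord_eq_mul_pow,
    prod_alternatingWord_eq_mul_pow]
  simp only [← hedef]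
  have hcomm : ∀ a : ℕ, e ^ a * e ^ a = 1 → s j * e ^ a = e ^ a * s j := by
    intro a h1
    have h2 : (e ^ a)⁻¹ = e ^ a := inv_eq_of_mul_eq_one_right h1
    have h3 := hconj a
    rw [h2] at h3
    calc s j * e ^ a = s j * e ^ a * (s j * s j) := by rw [htt, mul_one]
    _ = (s j * e ^ a * s j) * s j := by group
    _ = e ^ a * s j := by rw [h3]
  rcases Nat.even_or_odd m with ⟨a, ha⟩ | ⟨a, ha⟩ <;>
    rcases Nat.even_or_odd r with ⟨c, hc⟩ | ⟨c, hc⟩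
  · -- m = a+a, r = c+c
    have h1 : Even (m + r) := ⟨a + c, by omega⟩
    have h2 : Even m := ⟨a, ha⟩
    have h3 : Even r := ⟨c, hc⟩
    rw [if_pos h1, if_pos h2, if_pos h3,
      show (m + r) / 2 = a + c from by omega, show m / 2 = a from by omega,
      show r / 2 = c from by omega]
    simp [pow_add]
  · -- m = a+a, r = 2c+1
    have h1 : ¬ Even (m + r) := by rw [Nat.even_iff]; omega
    have h2 : ¬ Even r := by rw [Nat.even_iff]; omega
    have h2' : Even m := ⟨a, ha⟩
    rw [if_neg h1, if_pos h2', if_neg h2,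
      show (m + r) / 2 = a + c from by omega, show m / 2 = a from by omega,
      show r / 2 = c from by omega]
    have hsq : e ^ a * e ^ a = 1 := by rw [← pow_add, show a + a = m from ha.symm, he]
    rw [one_mul, pow_add, ← mul_assoc (e ^ a) (s j) (e ^ c), ← hcomm a hsq]
    group
  · -- m = 2a+1, r = c+c
    have h1 : ¬ Even (m + r) := by rw [Nat.even_iff]; omega
    have h2 : ¬ Even m := by rw [Nat.even_iff]; omega
    have h2' : Even r := ⟨c, hc⟩
    rw [if_neg h1, if_neg h2, if_pos h2',
      show (m + r) / 2 = a + c from by omega, show m / 2 = a from by omega,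
      show r / 2 = c from by omega]
    rw [one_mul, pow_add]
    group
  · -- m = 2a+1, r = 2c+1
    have h1 : Even (m + r) := by rw [Nat.even_iff]; omega
    have h2 : ¬ Even m := by rw [Nat.even_iff]; omega
    have h3 : ¬ Even r := by rw [Nat.even_iff]; omega
    rw [if_pos h1, if_neg h2, if_neg h3,
      show (m + r) / 2 = a + c + 1 from by omega, show m / 2 = a from by omega,
      show r / 2 = c from by omega]
    have h4 : (e ^ a)⁻¹ = e ^ (a + 1) := by
      apply inv_eq_of_mul_eq_one_right
      rw [← pow_add, show a + (a + 1) = m from by omega, he]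
    have h5 : (s j * e ^ a) * (s j * e ^ c) = (s j * e ^ a * s j) * e ^ c := by group
    rw [one_mul, h5, hconj a, h4, ← pow_add]
    congr 1
    omega


lemma get?_alternatingWord (i j : B) (n k : ℕ) (hk : k < n) :
    (alternatingWord i j n)[k]? =
      some (if Even (n - k - 1) then j else i) := by
  have h1 : (alternatingWord i j n)[k]? = ((alternatingWord i j n).drop k)[0]? := by
    rw [List.getElem?_drop]; simp
  rw [h1, drop_alternatingWord i j n k (by omega),
    show n - k = (n - k - 1) + 1 from by omega, alternatingWord_succ']
  rfl

lemma ris_aw_getD (i j : B) (n k : ℕ) (hk : k < n) :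
    (cs.rightInvSeq (alternatingWord i j n)).getD k 1 =
      (π (alternatingWord i j (n - k - 1)))⁻¹ * π (alternatingWord i j (n - k)) := by
  rw [cs.getD_rightInvSeq, get?_alternatingWord i j n k hk,
    drop_alternatingWord i j n (k + 1) (by omega)]
  have h2 : n - (k + 1) = n - k - 1 := by omega
  rw [h2]
  have h3 : π (alternatingWord i j (n - k)) =
      (if Even (n - k - 1) then s j else s i) * π (alternatingWord i j (n - k - 1)) := by
    rw [show n - k = (n - k - 1) + 1 from by omega, alternatingWord_succ', cs.wordProd_cons]
    by_cases h : Even (n - k - 1) <;> simp [h]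
  rw [h3]
  simp only [Option.map_some, Option.getD_some]
  by_cases h : Even (n - k - 1) <;> simp [h, mul_assoc]

lemma ris_braid_double (i j : B) :
    cs.rightInvSeq (alternatingWord i j (2 * Mx i j)) =
      cs.rightInvSeq (alternatingWord i j (Mx i j)) ++
        cs.rightInvSeq (alternatingWord i j (Mx i j)) := by
  set m := Mx i j with hm
  apply List.ext_getElem
  · simp [cs.length_rightInvSeq, length_alternatingWord]; omega
  · intro k h1 h2
    have hL : (cs.rightInvSeq (alternatingWord i j (2 * m))).length = 2 * m := by
      simp [cs.length_rightInvSeq, length_alternatingWord]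
    have hA : (cs.rightInvSeq (alternatingWord i j m)).length = m := by
      simp [cs.length_rightInvSeq, length_alternatingWord]
    have hk2m : k < 2 * m := by omega
    -- convert getElem to getD
    have e1 : ∀ (l : List W) (n : ℕ) (h : n < l.length), l[n] = l.getD n 1 := by
      intro l n h
      rw [List.getD_eq_getElem?_getD, List.getElem?_eq_getElem h]
      rfl
    rw [e1 _ _ h1]
    rcases lt_or_ge k m with hkm | hkm
    · rw [List.getElem_append_left (by rw [hA]; exact hkm), e1 _ _ (by rw [hA]; exact hkm)]
      rw [ris_aw_getD cs i j (2 * m) k hk2m, ris_aw_getD cs i j m k hkm]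
      have q1 : 2 * m - k - 1 = m + (m - k - 1) := by omega
      have q2 : 2 * m - k = m + (m - k) := by omega
      rw [q1, q2, wordProd_aw_add cs i j (m - k - 1), wordProd_aw_add cs i j (m - k)]
      rw [mul_inv_rev]
      group
    · rw [List.getElem_append_right (by rw [hA]; exact hkm)]
      have hlt : k - (cs.rightInvSeq (alternatingWord i j m)).length <
          (cs.rightInvSeq (alternatingWord i j m)).length := by
        rw [hA]; rw [hL] at h1; omega
      rw [e1 _ _ hlt]
      simp only [hA]
      rw [ris_aw_getD cs i j (2 * m) k hk2m, ris_aw_getD cs i j m (k - m) (by rw [hL] at h1; omega)]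
      have q1 : 2 * m - k - 1 = m - (k - m) - 1 := by omega
      have q2 : 2 * m - k = m - (k - m) := by omega
      rw [q1, q2]


lemma sgn_aw_braid (i j : B) (t : W) :
    sgn cs (alternatingWord i j (2 * Mx i j)) t = 1 := by
  unfold sgn
  rw [ris_braid_double cs i j, List.map_append, List.prod_append]
  exact Int.units_mul_self _

lemma prod_fperm_aw (i j : B) (n : ℕ) :
    ((alternatingWord i j (2 * n)).map (fperm cs)).prod = (fperm cs i * fperm cs j) ^ n := by
  induction n with
  | zero => simp [alternatingWord]
  | succ n ih =>
    rw [aw_two_mul_succ, List.map_cons, List.map_cons, List.prod_cons, List.prod_cons, ih,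
      pow_succ']
    rw [mul_assoc]

lemma fperm_liftable : Mx.IsLiftable (fperm cs) := by
  intro i j
  rw [← prod_fperm_aw cs i j (Mx i j)]
  apply Equiv.ext
  rintro ⟨t, e⟩
  rw [prod_map_fperm cs]
  have h1 : π (alternatingWord i j (2 * Mx i j)) = 1 := by
    rw [prod_alternatingWord_eq_mul_pow]
    have h2 : Even (2 * Mx i j) := even_two_mul _
    rw [if_pos h2, show 2 * Mx i j / 2 = Mx i j from by omega, one_mul,
      cs.simple_mul_simple_pow i j]
  rw [h1, sgn_aw_braid cs i j t]
  simp

/-- The sign character of a word depends only on the product of the word. -/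
lemma sgn_invariant {ω ω' : List B} (h : π ω = π ω') (t : W) :
    sgn cs ω t = sgn cs ω' t := by
  classical
  let Φ : W →* Equiv.Perm (W × ℤˣ) := cs.lift ⟨fperm cs, fperm_liftable cs⟩
  have key : ∀ χ : List B, Φ (π χ) = (χ.map (fperm cs)).prod := by
    intro χ
    induction χ with
    | nil => simp [cs.wordProd_nil]
    | cons a l ih =>
      rw [cs.wordProd_cons, map_mul, ih, List.map_cons, List.prod_cons,
        cs.lift_apply_simple (fperm_liftable cs)]
  have h2 : ((ω.map (fperm cs)).prod) (t, 1) = ((ω'.map (fperm cs)).prod) (t, 1) := by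
    rw [← key ω, ← key ω', h]
  rw [prod_map_fperm cs, prod_map_fperm cs, h] at h2
  have := (Prod.ext_iff.mp h2).2
  simpa using this

/-- The right exchange property. -/
lemma right_exchange {ω : List B} {i : B} (h : ℓ (π ω * s i) < ℓ (π ω)) :
    ∃ k < ω.length, π ω * s i = π (ω.eraseIdx k) := by
  obtain ⟨χ, hχlen, hχ⟩ := cs.exists_reduced_word (π ω * s i)
  have hred : cs.IsReduced χ := hχlen
  have hπ : π (χ ++ [i]) = π ω := by
    rw [cs.wordProd_append, ← hχ]
    simp [cs.wordProd_cons, cs.wordProd_nil, cs.simple_mul_simple_cancel_right]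
  have hnot : s i ∉ cs.rightInvSeq χ := by
    intro hmem
    have h2 := (cs.isRightInversion_of_mem_rightInvSeq hred hmem).2
    rw [← hχ, cs.simple_mul_simple_cancel_right] at h2
    omega
  have hsgn1 : sgn cs (χ ++ [i]) (s i) = -1 := by
    unfold sgn
    rw [← List.concat_eq_append, cs.rightInvSeq_concat, List.concat_eq_append,
      List.map_append, List.prod_append]
    have hall : ((List.map (MulAut.conj (s i)) (cs.rightInvSeq χ)).map
        (fun u => if s i = u then (-1 : ℤˣ) else 1)).prod = 1 := by
      apply List.prod_eq_one
      intro x hx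
      obtain ⟨u, hu, rfl⟩ := List.mem_map.mp hx
      obtain ⟨v, hv, rfl⟩ := List.mem_map.mp hu
      rw [if_neg]
      intro hc
      apply hnot
      have : v = s i := by
        have := hc
        simp only [MulAut.conj_apply, cs.inv_simple] at this
        have h3 := congrArg (fun z => s i * z * s i) this
        symm
        simpa [mul_assoc, cs.simple_mul_simple_cancel_left,
          cs.simple_mul_simple_cancel_right] using h3
      rwa [this] at hv
    rw [hall, one_mul]
    simp
  have hsgn2 := sgn_invariant cs hπ (s i)
  rw [hsgn1] at hsgn2
  have hmem : s i ∈ cs.rightInvSeq ω := by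
    by_contra hc
    rw [sgn_eq_one_of_not_mem cs ω _ hc] at hsgn2
    exact absurd hsgn2 (by decide)
  obtain ⟨k, hk, hkeq⟩ := List.mem_iff_getElem.mp hmem
  rw [cs.length_rightInvSeq] at hk
  refine ⟨k, hk, ?_⟩
  have hgetD : (cs.rightInvSeq ω).getD k 1 = s i := by
    rw [List.getD_eq_getElem?_getD, List.getElem?_eq_getElem (by rwa [cs.length_rightInvSeq])]
    simpa using hkeq
  rw [← hgetD]
  exact cs.wordProd_mul_getD_rightInvSeq ω k

/-- The left exchange property, sublist form. -/
lemma left_exchange {ω : List B} {i : B} (h : ℓ (s i * π ω) < ℓ (π ω)) :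
    ∃ ω' : List B, ω'.Sublist ω ∧ ω'.length + 1 = ω.length ∧ π ω' = s i * π ω := by
  have h2 : ℓ (π ω.reverse * s i) < ℓ (π ω.reverse) := by
    rw [cs.wordProd_reverse]
    have e1 : (π ω)⁻¹ * s i = (s i * π ω)⁻¹ := by rw [mul_inv_rev, cs.inv_simple]
    rw [e1, cs.length_inv, cs.length_inv]
    exact h
  obtain ⟨k, hk, hkeq⟩ := right_exchange cs h2
  refine ⟨(ω.reverse.eraseIdx k).reverse, ?_, ?_, ?_⟩
  · have := (List.eraseIdx_sublist ω.reverse k).reverse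
    simpa using this
  · rw [List.length_reverse, List.length_eraseIdx]
    rw [List.length_reverse] at hk ⊢
    simp [hk]
    omega
  · rw [cs.wordProd_reverse, ← hkeq, cs.wordProd_reverse, mul_inv_rev, cs.inv_simple, inv_inv]


lemma wordProd_mem_closure {K : Set B} {ω : List B} (hω : ∀ i ∈ ω, i ∈ K) :
    π ω ∈ Subgroup.closure (cs.simple '' K) := by
  induction ω with
  | nil => rw [cs.wordProd_nil]; exact one_mem _
  | cons a l ih =>
    rw [cs.wordProd_cons]
    exact mul_mem (Subgroup.subset_closure ⟨a, hω a (List.mem_cons_self), rfl⟩)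
      (ih (fun i hi => hω i (List.mem_cons_of_mem a hi)))

lemma exists_K_word {K : Set B} {p : W} (hp : p ∈ Subgroup.closure (cs.simple '' K)) :
    ∃ ω : List B, (∀ i ∈ ω, i ∈ K) ∧ π ω = p := by
  induction hp using Subgroup.closure_induction with
  | mem x hx =>
    obtain ⟨i, hi, rfl⟩ := hx
    exact ⟨[i], by simpa using hi, by simp [cs.wordProd_cons, cs.wordProd_nil]⟩
  | one => exact ⟨[], by simp, cs.wordProd_nil⟩
  | mul x y hx hy ihx ihy =>
    obtain ⟨ω₁, h1, rfl⟩ := ihx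
    obtain ⟨ω₂, h2, rfl⟩ := ihy
    exact ⟨ω₁ ++ ω₂, fun i hi => (List.mem_append.mp hi).elim (h1 i) (h2 i),
      cs.wordProd_append ω₁ ω₂⟩
  | inv x hx ihx =>
    obtain ⟨ω, h1, rfl⟩ := ihx
    exact ⟨ω.reverse, fun i hi => h1 i (List.mem_reverse.mp hi), cs.wordProd_reverse ω⟩

lemma reduce_word (ω : List B) :
    ∃ ω' : List B, (∀ i ∈ ω', i ∈ ω) ∧ π ω' = π ω ∧ ω'.length = ℓ (π ω) := by
  induction ω with
  | nil => exact ⟨[], by simp, rfl, by simp [cs.wordProd_nil]⟩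
  | cons a l ih =>
    obtain ⟨ω', hmem, hprod, hlen⟩ := ih
    rcases cs.length_simple_mul (π l) a with hup | hdown
    · refine ⟨a :: ω', ?_, ?_, ?_⟩
      · intro i hi
        rcases List.mem_cons.mp hi with rfl | hi
        · exact List.mem_cons_self
        · exact List.mem_cons_of_mem _ (hmem i hi)
      · rw [cs.wordProd_cons, cs.wordProd_cons, hprod]
      · rw [cs.wordProd_cons]
        simp [hlen, hup]
    · have hlt : ℓ (s a * π ω') < ℓ (π ω') := by rw [hprod]; omega
      obtain ⟨ω'', hsub, hlen'', hprod''⟩ := left_exchange cs hlt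
      refine ⟨ω'', ?_, ?_, ?_⟩
      · intro i hi
        exact List.mem_cons_of_mem _ (hmem i (hsub.subset hi))
      · rw [hprod'', hprod, cs.wordProd_cons]
      · rw [cs.wordProd_cons]
        omega

lemma exists_reduced_K_word {K : Set B} {p : W} (hp : p ∈ Subgroup.closure (cs.simple '' K)) :
    ∃ ω : List B, (∀ i ∈ ω, i ∈ K) ∧ π ω = p ∧ ω.length = ℓ p := by
  obtain ⟨ω, hmem, rfl⟩ := exists_K_word cs hp
  obtain ⟨ω', hmem', hprod, hlen⟩ := reduce_word cs ω
  exact ⟨ω', fun i hi => hmem i (hmem' i hi), hprod, hlen⟩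

/-- Additivity of lengths over a coset with minimal element `d`. -/
lemma length_mul_min_coset {K : Set B} {d : W}
    (hd : ∀ q ∈ Subgroup.closure (cs.simple '' K), ℓ d ≤ ℓ (q * d)) :
    ∀ n : ℕ, ∀ p ∈ Subgroup.closure (cs.simple '' K), ℓ p = n → ℓ (p * d) = ℓ p + ℓ d := by
  intro n
  induction n using Nat.strong_induction_on with
  | _ n ihn =>
    intro p hp hlen
    rcases eq_or_ne p 1 with rfl | hne
    · simp
    obtain ⟨ω, hωK, hωprod, hωlen⟩ := exists_reduced_K_word cs hp
    cases ω with
    | nil => exact absurd (hωprod.symm.trans (cs.wordProd_nil)) hne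
    | cons i ω₀ =>
      have hiK : i ∈ K := hωK i (List.mem_cons_self)
      have hp' : π ω₀ ∈ Subgroup.closure (cs.simple '' K) :=
        wordProd_mem_closure cs (fun a ha => hωK a (List.mem_cons_of_mem _ ha))
      set p' := π ω₀ with hp'def
      have hps : p = s i * p' := by rw [← hωprod, cs.wordProd_cons]
      have hlenp' : ℓ p' = ω₀.length := by
        apply Nat.le_antisymm (cs.length_wordProd_le ω₀)
        have h1 : ℓ p ≤ ℓ p' + 1 := by
          rw [hps]
          have := cs.length_simple_mul p' i
          omega
        rw [← hωlen] at h1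
        simpa using h1
      have hlt : ℓ p' < n := by
        rw [← hlen, ← hωlen, hlenp']
        simp
      have ihp' : ℓ (p' * d) = ℓ p' + ℓ d := ihn (ℓ p') hlt p' hp' rfl
      rcases cs.length_simple_mul (p' * d) i with hup | hdown
      · have e1 : ℓ (p * d) = ℓ (p' * d) + 1 := by rw [hps, mul_assoc]; exact hup
        have e2 : ℓ p = ω₀.length + 1 := by rw [← hωlen]; simp
        omega
      · -- contradiction via the exchange property
        exfalso
        obtain ⟨χ, hχlen, hχprod⟩ := cs.exists_reduced_word d
        have hχlen : χ.length = ℓ d := by rw [hχprod]; exact Eq.symm hχlen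
        have hbig : π (ω₀ ++ χ) = p' * d := by
          rw [cs.wordProd_append, ← hp'def, ← hχprod]
        have hlt2 : ℓ (s i * π (ω₀ ++ χ)) < ℓ (π (ω₀ ++ χ)) := by
          rw [hbig]; omega
        obtain ⟨ωe, hsub, hlene, hprode⟩ := left_exchange cs hlt2
        rw [List.sublist_append_iff] at hsub
        obtain ⟨a, b, rfl, ha, hb⟩ := hsub
        have hla : a.length ≤ ω₀.length := ha.length_le
        have hlb : b.length ≤ χ.length := hb.length_le
        have hlab : a.length + b.length + 1 = ω₀.length + χ.length := by
          rw [← List.length_append]; simp at hlene ⊢; omega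
        rcases eq_or_lt_of_le hla with haeq | halt
        · -- a = ω₀, so the erased letter is in the `d` part
          have ha' : a = ω₀ := ha.eq_of_length haeq
          subst ha'
          have h1 : p' * π b = s i * (p' * d) := by
            rw [hp'def, ← cs.wordProd_append, hprode, hbig]
          have h2 : π b = (p'⁻¹ * s i * p') * d := by
            have h2' : π b = p'⁻¹ * (p' * π b) := by group
            rw [h2', h1]
            group
          have h3 : p'⁻¹ * s i * p' ∈ Subgroup.closure (cs.simple '' K) :=
            mul_mem (mul_mem (inv_mem hp')
              (Subgroup.subset_closure ⟨i, hiK, rfl⟩)) hp'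
          have h4 := hd _ h3
          rw [← h2] at h4
          have h5 := cs.length_wordProd_le b
          omega
        · -- the erased letter is in the `p'` part
          have hbeq : b = χ := hb.eq_of_length (by omega)
          subst hbeq
          have h1 : π a * d = s i * (p' * d) := by
            rw [hχprod, ← cs.wordProd_append, hprode, hbig, ← hχprod]
          have h2 : π a = s i * p' := by
            have h1' : π a * d = (s i * p') * d := by rw [h1]; group
            exact mul_right_cancel h1'
          have h3 := cs.length_wordProd_le a
          rw [h2] at h3
          have h4 : ℓ (s i * p') = ℓ p := by rw [hps]
          rw [h4, ← hωlen] at h3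
          simp at h3
          omega

/-- If `x` has no left descent in `K`, lengths add: `ℓ(p x) = ℓ p + ℓ x` for `p ∈ W_K`. -/
lemma length_closure_mul {K : Set B} {x : W} (hx : ∀ i ∈ K, ¬ cs.IsLeftDescent x i) :
    ∀ p ∈ Subgroup.closure (cs.simple '' K), ℓ (p * x) = ℓ p + ℓ x := by
  have hex : ∃ n : ℕ, ∃ q, q ∈ Subgroup.closure (cs.simple '' K) ∧ ℓ (q * x) = n :=
    ⟨ℓ x, 1, one_mem _, by simp⟩
  classical
  obtain ⟨q₀, hq₀mem, hq₀len⟩ := Nat.find_spec hex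
  set d := q₀ * x with hddef
  have hdlen : ℓ d = Nat.find hex := hq₀len
  have hd : ∀ q ∈ Subgroup.closure (cs.simple '' K), ℓ d ≤ ℓ (q * d) := by
    intro q hq
    have h1 : q * d = (q * q₀) * x := by rw [hddef]; group
    have h2 : Nat.find hex ≤ ℓ ((q * q₀) * x) :=
      Nat.find_min' hex ⟨q * q₀, mul_mem hq hq₀mem, rfl⟩
    rw [h1, hdlen]
    exact h2
  have hadd : ∀ p ∈ Subgroup.closure (cs.simple '' K), ℓ (p * d) = ℓ p + ℓ d :=
    fun p hp => length_mul_min_coset cs hd (ℓ p) p hp rfl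
  have hxd : x = d := by
    by_contra hne
    have hq₀inv : q₀⁻¹ ∈ Subgroup.closure (cs.simple '' K) := inv_mem hq₀mem
    have hxq : x = q₀⁻¹ * d := by rw [hddef]; group
    have hq₀ne : q₀⁻¹ ≠ 1 := by
      intro hc
      rw [hc, one_mul] at hxq
      exact hne hxq
    obtain ⟨ω, hωK, hωprod, hωlen⟩ := exists_reduced_K_word cs hq₀inv
    cases ω with
    | nil => exact hq₀ne (hωprod.symm.trans cs.wordProd_nil)
    | cons i ω₀ =>
      have hiK : i ∈ K := hωK i (List.mem_cons_self)
      have hp₀ : π ω₀ ∈ Subgroup.closure (cs.simple '' K) :=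
        wordProd_mem_closure cs (fun a ha => hωK a (List.mem_cons_of_mem _ ha))
      have hlen₀ : ℓ (π ω₀) = ω₀.length := by
        apply Nat.le_antisymm (cs.length_wordProd_le ω₀)
        have h1 : ℓ q₀⁻¹ ≤ ℓ (π ω₀) + 1 := by
          rw [← hωprod, cs.wordProd_cons]
          have := cs.length_simple_mul (π ω₀) i
          omega
        rw [← hωlen] at h1
        simpa using h1
      have hdesc : cs.IsLeftDescent x i := by
        rw [CoxeterSystem.IsLeftDescent]
        have h1 : s i * x = π ω₀ * d := by
          rw [hxq, ← hωprod, cs.wordProd_cons, mul_assoc,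
            cs.simple_mul_simple_cancel_left]
        have h2 : ℓ x = ℓ q₀⁻¹ + ℓ d := by rw [hxq]; exact hadd _ hq₀inv
        rw [h1, hadd _ hp₀, hlen₀, h2, ← hωlen]
        simp
      exact hx i hiK hdesc
  intro p hp
  rw [hxd]
  exact hadd p hp

/-- Right-handed version: if `x` has no right descent in `K`. -/
lemma length_mul_closure {K : Set B} {x : W} (hx : ∀ i ∈ K, ¬ cs.IsRightDescent x i) :
    ∀ q ∈ Subgroup.closure (cs.simple '' K), ℓ (x * q) = ℓ x + ℓ q := by
  intro q hq
  have h1 : ∀ i ∈ K, ¬ cs.IsLeftDescent x⁻¹ i := by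
    intro i hi hc
    exact hx i hi (cs.isLeftDescent_inv_iff.mp hc)
  have h2 := length_closure_mul cs h1 q⁻¹ (inv_mem hq)
  have h3 : (q⁻¹ * x⁻¹) = (x * q)⁻¹ := by group
  rw [h3, cs.length_inv, cs.length_inv, cs.length_inv] at h2
  omega


/-- Two-sided descent lemma: if `s i` is a left descent and `s j` a right descent of `x`,
and `s i * x ≠ x * s j`, then `ℓ(s i * x * s j) < ℓ x`. -/
lemma two_sided_descent {x : W} {i j : B} (hl : ℓ (s i * x) < ℓ x) (hr : ℓ (x * s j) < ℓ x)
    (hne : s i * x ≠ x * s j) : ℓ (s i * x * s j) < ℓ x := by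
  have hl' : ℓ (s i * x) + 1 = ℓ x := by
    rcases cs.length_simple_mul x i with h | h <;> omega
  have hr' : ℓ (x * s j) + 1 = ℓ x := by
    rcases cs.length_mul_simple x j with h | h <;> omega
  rcases cs.length_mul_simple (s i * x) j with hup | hdown
  swap
  · omega
  exfalso
  have hup' : ℓ (s i * x * s j) = ℓ x := by omega
  obtain ⟨χ, hχlen, hχprod⟩ := cs.exists_reduced_word (s i * x)
  have hχlen : χ.length = ℓ (s i * x) := by rw [hχprod]; exact Eq.symm hχlen
  have hπω : π (χ ++ [j]) = s i * x * s j := by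
    rw [cs.wordProd_append, ← hχprod]
    simp [cs.wordProd_cons, cs.wordProd_nil]
  have hsx : s i * π (χ ++ [j]) = x * s j := by
    rw [hπω, ← mul_assoc, ← mul_assoc, cs.simple_mul_simple_self, one_mul]
  have hlt : ℓ (s i * π (χ ++ [j])) < ℓ (π (χ ++ [j])) := by
    rw [hsx, hπω, hup']
    omega
  obtain ⟨ωe, hsub, hlene, hprode⟩ := left_exchange cs hlt
  rw [List.sublist_append_iff] at hsub
  obtain ⟨a, b, rfl, ha, hb⟩ := hsub
  rcases List.sublist_singleton.mp hb with rfl | rfl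
  · -- b = [], so a = χ and we contradict `hne`
    have hlena : a.length = χ.length := by
      simp at hlene ⊢
      omega
    have ha' : a = χ := ha.eq_of_length hlena
    subst ha'
    rw [hsx] at hprode
    rw [List.append_nil, ← hχprod] at hprode
    exact hne hprode
  · -- b = [j]
    have h1 : π (a ++ [j]) = π a * s j := by
      rw [cs.wordProd_append]
      simp [cs.wordProd_cons, cs.wordProd_nil]
    rw [hsx] at hprode
    rw [h1] at hprode
    have h2 : π a = x := mul_right_cancel hprode
    have h3 := cs.length_wordProd_le a
    rw [h2] at h3
    simp at hlene
    omega

end St10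


theorem statement10 {B W : Type} [Group W] {Mx : CoxeterMatrix B} (cs : CoxeterSystem Mx W)
    (star : W ≃* W) (hstar2 : ∀ w : W, star (star w) = w)
    (hstarS : ∀ i : B, ∃ j : B, star (cs.simple i) = cs.simple j)
    -- `K ⊆ S` with `W_K` finite, and `W_{K*}`
    (K : Set B)
    (hKfin : ((Subgroup.closure (cs.simple '' K) : Subgroup W) : Set W).Finite)
    -- `Ω` is a `(W_K, W_{K*})`-double coset, stable under `w ↦ (w*)⁻¹`
    (Ω : Set W)
    (hΩdc : ∃ g : W, Ω = {w : W | ∃ p ∈ (Subgroup.closure (cs.simple '' K) : Subgroup W),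
      ∃ q ∈ (Subgroup.closure ((fun t => star t) '' (cs.simple '' K)) : Subgroup W),
      w = p * g * q})
    (hΩstab : ∀ w ∈ Ω, (star w)⁻¹ ∈ Ω)
    -- `x ∈ I_* ∩ Ω`
    (x : W) (hx : (star x)⁻¹ = x) (hxΩ : x ∈ Ω)
    -- `b` is the unique element of minimal length of `Ω`
    (b : W) (hb : b ∈ Ω) (hbmin : ∀ w ∈ Ω, w ≠ b → cs.length b < cs.length w) :
    -- the chain from `x` down to `b`
    ∃ (n : ℕ) (xs : ℕ → W),
      xs 0 = x ∧ xs n = b ∧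
      (∀ i ≤ n, xs i ∈ Ω ∧ (star (xs i))⁻¹ = xs i) ∧
      (∀ i < n, ∃ j : B, xs (i + 1) =
        if cs.simple j * xs i = xs i * star (cs.simple j) then cs.simple j * xs i
        else cs.simple j * xs i * star (cs.simple j)) := by
  classical
  obtain ⟨f, hf⟩ := Classical.axiomOfChoice hstarS
  -- `star` preserves lengths
  have hstarword : ∀ ω : List B, star (cs.wordProd ω) = cs.wordProd (ω.map f) := by
    intro ω
    induction ω with
    | nil => simp [cs.wordProd_nil]
    | cons a l ih => rw [cs.wordProd_cons, map_mul, ih, List.map_cons, cs.wordProd_cons, hf a]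
  have hstarle : ∀ w : W, cs.length (star w) ≤ cs.length w := by
    intro w
    obtain ⟨ω, hωlen, hωprod⟩ := cs.exists_reduced_word w
    have hωlen : ω.length = cs.length w := by rw [hωprod]; exact Eq.symm hωlen
    rw [hωprod, hstarword ω]
    calc cs.length (cs.wordProd (ω.map f)) ≤ (ω.map f).length := cs.length_wordProd_le _
    _ = ω.length := List.length_map f
    _ = cs.length (cs.wordProd ω) := by rw [← hωprod, hωlen, hωprod]
  have hstarlen : ∀ w : W, cs.length (star w) = cs.length w := by
    intro w
    refine le_antisymm (hstarle w) ?_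
    have h1 := hstarle (star w)
    rwa [hstar2 w] at h1
  -- the image generating set is the set of simples indexed by `f '' K`
  have hsetseq : (fun t => star t) '' (cs.simple '' K) = cs.simple '' (f '' K) := by
    ext u
    constructor
    · rintro ⟨v, ⟨i, hiK, rfl⟩, rfl⟩
      exact ⟨f i, ⟨i, hiK, rfl⟩, (hf i).symm⟩
    · rintro ⟨j, ⟨i, hiK, rfl⟩, rfl⟩
      exact ⟨cs.simple i, ⟨i, hiK, rfl⟩, hf i⟩
  obtain ⟨g, hg⟩ := hΩdc
  -- multiplication stability of the double coset
  have hmul : ∀ w ∈ Ω, ∀ p ∈ (Subgroup.closure (cs.simple '' K) : Subgroup W),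
      ∀ q ∈ (Subgroup.closure ((fun t => star t) '' (cs.simple '' K)) : Subgroup W),
      p * w * q ∈ Ω := by
    intro w hw p hp q hq
    rw [hg] at hw ⊢
    obtain ⟨p₀, hp₀, q₀, hq₀, rfl⟩ := hw
    exact ⟨p * p₀, mul_mem hp hp₀, q₀ * q, mul_mem hq₀ hq, by group⟩
  -- any two elements of the double coset are related
  have hdecomp : ∀ w ∈ Ω, ∀ w' ∈ Ω, ∃ p ∈ (Subgroup.closure (cs.simple '' K) : Subgroup W),
      ∃ q ∈ (Subgroup.closure ((fun t => star t) '' (cs.simple '' K)) : Subgroup W),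
      w' = p * w * q := by
    intro w hw w' hw'
    rw [hg] at hw hw'
    obtain ⟨p, hp, q, hq, rfl⟩ := hw
    obtain ⟨p', hp', q', hq', rfl⟩ := hw'
    exact ⟨p' * p⁻¹, mul_mem hp' (inv_mem hp), q⁻¹ * q', mul_mem (inv_mem hq) hq', by group⟩
  suffices H : ∀ n : ℕ, ∀ y : W, cs.length y = n → y ∈ Ω → (star y)⁻¹ = y →
      ∃ (n' : ℕ) (xs : ℕ → W),
        xs 0 = y ∧ xs n' = b ∧
        (∀ i ≤ n', xs i ∈ Ω ∧ (star (xs i))⁻¹ = xs i) ∧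
        (∀ i < n', ∃ j : B, xs (i + 1) =
          if cs.simple j * xs i = xs i * star (cs.simple j) then cs.simple j * xs i
          else cs.simple j * xs i * star (cs.simple j)) by
    exact H (cs.length x) x rfl hxΩ hx
  intro n
  induction n using Nat.strong_induction_on with
  | _ n ihn =>
    intro y hylen hyΩ hyI
    by_cases hdesc : ∃ i ∈ K, cs.IsLeftDescent y i
    · -- descend
      obtain ⟨i₀, hi₀K, hi₀desc⟩ := hdesc
      have hi₀desc' : cs.length (cs.simple i₀ * y) < cs.length y := hi₀desc
      have htinv : (star (cs.simple i₀))⁻¹ = star (cs.simple i₀) := by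
        rw [hf i₀, cs.inv_simple]
      have hsiG : cs.simple i₀ ∈ (Subgroup.closure (cs.simple '' K) : Subgroup W) :=
        Subgroup.subset_closure ⟨i₀, hi₀K, rfl⟩
      have htG : star (cs.simple i₀) ∈
          (Subgroup.closure ((fun t => star t) '' (cs.simple '' K)) : Subgroup W) :=
        Subgroup.subset_closure ⟨cs.simple i₀, ⟨i₀, hi₀K, rfl⟩, rfl⟩
      -- right descent
      have hyinveq : y * star (cs.simple i₀) = (star (cs.simple i₀ * y))⁻¹ := by
        rw [map_mul, mul_inv_rev, hyI, htinv]
      have hrd : cs.length (y * star (cs.simple i₀)) < cs.length y := by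
        rw [hyinveq, cs.length_inv, hstarlen]
        exact hi₀desc'
      -- define the next element of the chain and check its properties
      by_cases hcomm : cs.simple i₀ * y = y * star (cs.simple i₀)
      · -- y₁ = s i₀ * y
        have hy₁Ω : cs.simple i₀ * y ∈ Ω := by
          have := hmul y hyΩ (cs.simple i₀) hsiG 1 (one_mem _)
          simpa using this
        have hy₁I : (star (cs.simple i₀ * y))⁻¹ = cs.simple i₀ * y := by
          rw [← hyinveq, ← hcomm]
        have hy₁len : cs.length (cs.simple i₀ * y) < n := by omega
        obtain ⟨n', xs, h0, hn', hmem, hstep⟩ :=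
          ihn (cs.length (cs.simple i₀ * y)) hy₁len (cs.simple i₀ * y) rfl hy₁Ω hy₁I
        refine ⟨n' + 1, fun k => if k = 0 then y else xs (k - 1), by simp, ?_, ?_, ?_⟩
        · simp [hn']
        · intro i hi
          by_cases hi0 : i = 0
          · subst hi0; simpa using ⟨hyΩ, hyI⟩
          · have := hmem (i - 1) (by omega)
            simpa [hi0] using this
        · intro i hi
          rcases Nat.eq_zero_or_pos i with rfl | hipos
          · refine ⟨i₀, ?_⟩
            norm_num
            rw [h0, if_pos hcomm]
          · obtain ⟨j, hj⟩ := hstep (i - 1) (by omega)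
            refine ⟨j, ?_⟩
            have e1 : i + 1 ≠ 0 := by omega
            have e2 : i ≠ 0 := by omega
            simp only [if_neg e1, if_neg e2]
            have e3 : i + 1 - 1 = (i - 1) + 1 := by omega
            rw [e3, hj]
      · -- y₁ = s i₀ * y * star (s i₀)
        have hy₁Ω : cs.simple i₀ * y * star (cs.simple i₀) ∈ Ω :=
          hmul y hyΩ _ hsiG _ htG
        have hy₁I : (star (cs.simple i₀ * y * star (cs.simple i₀)))⁻¹
            = cs.simple i₀ * y * star (cs.simple i₀) :=
          calc (star (cs.simple i₀ * y * star (cs.simple i₀)))⁻¹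
              = (star (cs.simple i₀) * star y * star (star (cs.simple i₀)))⁻¹ := by
                rw [map_mul, map_mul]
            _ = (star (cs.simple i₀) * star y * cs.simple i₀)⁻¹ := by rw [hstar2]
            _ = (cs.simple i₀)⁻¹ * ((star y)⁻¹ * (star (cs.simple i₀))⁻¹) := by
                rw [mul_inv_rev, mul_inv_rev]
            _ = cs.simple i₀ * y * star (cs.simple i₀) := by
                rw [hyI, htinv, cs.inv_simple, ← mul_assoc]
        have hrd2 : cs.length (y * cs.simple (f i₀)) < cs.length y := by
          rw [← hf i₀]; exact hrd
        have hne2 : cs.simple i₀ * y ≠ y * cs.simple (f i₀) := by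
          rw [← hf i₀]; exact hcomm
        have h2 := St10.two_sided_descent cs hi₀desc' hrd2 hne2
        have hy₁len : cs.length (cs.simple i₀ * y * star (cs.simple i₀)) < n := by
          rw [hf i₀]; omega
        obtain ⟨n', xs, h0, hn', hmem, hstep⟩ :=
          ihn (cs.length (cs.simple i₀ * y * star (cs.simple i₀))) hy₁len
            (cs.simple i₀ * y * star (cs.simple i₀)) rfl hy₁Ω hy₁I
        refine ⟨n' + 1, fun k => if k = 0 then y else xs (k - 1), by simp, ?_, ?_, ?_⟩
        · simp [hn']
        · intro i hi
          by_cases hi0 : i = 0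
          · subst hi0; simpa using ⟨hyΩ, hyI⟩
          · have := hmem (i - 1) (by omega)
            simpa [hi0] using this
        · intro i hi
          rcases Nat.eq_zero_or_pos i with rfl | hipos
          · refine ⟨i₀, ?_⟩
            norm_num
            rw [h0, if_neg hcomm]
          · obtain ⟨j, hj⟩ := hstep (i - 1) (by omega)
            refine ⟨j, ?_⟩
            have e1 : i + 1 ≠ 0 := by omega
            have e2 : i ≠ 0 := by omega
            simp only [if_neg e1, if_neg e2]
            have e3 : i + 1 - 1 = (i - 1) + 1 := by omega
            rw [e3, hj]
    · -- no descent: `y` is the minimal element `b`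
      push_neg at hdesc
      have hnr : ∀ j ∈ f '' K, ¬ cs.IsRightDescent y j := by
        rintro j ⟨i, hiK, rfl⟩ hcon
        apply hdesc i hiK
        have h1 : cs.simple i * y = (star (y * cs.simple (f i)))⁻¹ := by
          rw [map_mul, mul_inv_rev, hyI, ← hf i, hstar2 (cs.simple i), cs.inv_simple]
        have h2 : cs.length (cs.simple i * y) < cs.length y := by
          rw [h1, cs.length_inv, hstarlen]
          exact hcon
        exact h2
      have hbound : ∀ w ∈ Ω, cs.length y ≤ cs.length w := by
        intro w hw
        obtain ⟨p, hp, q, hq, rfl⟩ := hdecomp y hyΩ w hw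
        have haddL : cs.length (p * y) = cs.length p + cs.length y :=
          St10.length_closure_mul cs hdesc p hp
        have hq' : q ∈ (Subgroup.closure (cs.simple '' (f '' K)) : Subgroup W) := by
          rwa [← hsetseq]
        have haddR : cs.length (y * q) = cs.length y + cs.length q :=
          St10.length_mul_closure cs hnr q hq'
        have hsub1 : cs.length (p * y) ≤ cs.length (p * y * q) + cs.length q := by
          have h := cs.length_mul_le (p * y * q) q⁻¹
          have e : p * y * q * q⁻¹ = p * y := by group
          rw [e, cs.length_inv] at h
          exact h
        have hsub2 : cs.length (y * q) ≤ cs.length p + cs.length (p * y * q) := by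
          have h := cs.length_mul_le p⁻¹ (p * y * q)
          have e : p⁻¹ * (p * y * q) = y * q := by group
          rw [e, cs.length_inv] at h
          exact h
        omega
      have hyb : y = b := by
        by_contra hne
        have h1 := hbmin y hyΩ hne
        have h2 := hbound b hb
        omega
      exact ⟨0, fun _ => y, rfl, hyb, fun i _ => ⟨hyΩ, hyI⟩, fun i hi => absurd hi (by omega)⟩
end

section
/- Let ζ : M → ℚ(u) be the A-linear map with ζ(a_w) = u^{l(w)}·((u−1)/(u+1))^{φ(w)} for every w ∈ I_*. Then for every x ∈ W and m ∈ M we have ζ(T_x·m) = u^{2l(x)}·ζ(m). -/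
/-!
Statement 13 (5.7(a)): let `ζ : M → ℚ(u)` be the `A`-linear map with
`ζ(a_w) = u^{l(w)}((u−1)/(u+1))^{φ(w)}` for `w ∈ I_*`.  Then for every `x ∈ W` and
`m ∈ M` we have `ζ(T_x·m) = u^{2l(x)}·ζ(m)`.
-/

open LaurentPolynomial

lemma ratX_add_one_ne_zero : (RatFunc.X + 1 : RatFunc ℚ) ≠ 0 := by
  have h : (RatFunc.X + 1 : RatFunc ℚ)
      = algebraMap (Polynomial ℚ) _ (Polynomial.X + Polynomial.C 1) := by
    simp [RatFunc.algebraMap_X]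
  rw [h]
  exact RatFunc.algebraMap_ne_zero (Polynomial.X_add_C_ne_zero 1)

lemma ratX_sub_one_ne_zero : (RatFunc.X - 1 : RatFunc ℚ) ≠ 0 := by
  have h : (RatFunc.X - 1 : RatFunc ℚ)
      = algebraMap (Polynomial ℚ) _ (Polynomial.X - Polynomial.C 1) := by
    simp [RatFunc.algebraMap_X]
  rw [h]
  exact RatFunc.algebraMap_ne_zero (Polynomial.X_sub_C_ne_zero 1)

/-- Ascent lifting lemma, proved by an elementary Hecke-algebra computation. -/
lemma auxLift {B W : Type} [Group W] {Mx : CoxeterMatrix B} (cs : CoxeterSystem Mx W)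
    (H : Type) [Ring H] [Algebra HeckeA H] (T : W → H)
    (hTbasis : ∃ bT : Module.Basis W HeckeA H, ∀ w : W, bT w = T w)
    (hTmul : ∀ w w' : W, cs.length (w * w') = cs.length w + cs.length w' →
      T w * T w' = T (w * w'))
    (hTquad : ∀ i : B, (T (cs.simple i) + 1) *
      (T (cs.simple i) - algebraMap HeckeA H (uA ^ 2)) = 0)
    (hne : (uA ^ 2 - 1 : HeckeA) ≠ 0)
    (i j : B) (x : W)
    (h1 : cs.length (cs.simple i * x) = cs.length x + 1)
    (h2 : cs.length (x * cs.simple j) = cs.length x + 1)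
    (h3 : cs.length (cs.simple i * x * cs.simple j) = cs.length x) :
    cs.simple i * x = x * cs.simple j := by
  classical
  set c : H := algebraMap HeckeA H (uA ^ 2) with hc
  have hTss : ∀ k : B, T (cs.simple k) * T (cs.simple k)
      = T (cs.simple k) * c - T (cs.simple k) + c := by
    intro k
    have h := hTquad k
    rw [mul_sub, add_mul, add_mul, one_mul, one_mul, sub_eq_zero] at h
    have h' := eq_sub_of_add_eq h
    rw [h']; abel
  have hTsl : ∀ (k : B) (v : W), cs.length (cs.simple k * v) = cs.length v + 1 →
      T (cs.simple k) * T v = T (cs.simple k * v) := by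
    intro k v h
    exact hTmul _ _ (by rw [cs.length_simple]; omega)
  have hTsr : ∀ (k : B) (v : W), cs.length (v * cs.simple k) = cs.length v + 1 →
      T v * T (cs.simple k) = T (v * cs.simple k) := by
    intro k v h
    exact hTmul _ _ (by rw [cs.length_simple]; omega)
  have hTdr : ∀ (v : W) (k : B), cs.length (v * cs.simple k) + 1 = cs.length v →
      T v * T (cs.simple k) = T v * c - T v + T (v * cs.simple k) * c := by
    intro v k h
    have hv : (v * cs.simple k) * cs.simple k = v := cs.simple_mul_simple_cancel_right k
    have e : T (v * cs.simple k) * T (cs.simple k) = T v := by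
      rw [hTsr k (v * cs.simple k) (by rw [hv]; omega), hv]
    calc T v * T (cs.simple k)
        = (T (v * cs.simple k) * T (cs.simple k)) * T (cs.simple k) := by rw [e]
      _ = T (v * cs.simple k) * (T (cs.simple k) * T (cs.simple k)) := by rw [mul_assoc]
      _ = T (v * cs.simple k) * (T (cs.simple k) * c - T (cs.simple k) + c) := by rw [hTss]
      _ = (T (v * cs.simple k) * T (cs.simple k)) * c - T (v * cs.simple k) * T (cs.simple k)
            + T (v * cs.simple k) * c := by rw [mul_add, mul_sub, ← mul_assoc]
      _ = T v * c - T v + T (v * cs.simple k) * c := by rw [e]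
  have hTdl : ∀ (v : W) (k : B), cs.length (cs.simple k * v) + 1 = cs.length v →
      T (cs.simple k) * T v = c * T v - T v + c * T (cs.simple k * v) := by
    intro v k h
    have hv : cs.simple k * (cs.simple k * v) = v := cs.simple_mul_simple_cancel_left k
    have e : T (cs.simple k) * T (cs.simple k * v) = T v := by
      rw [hTsl k (cs.simple k * v) (by rw [hv]; omega), hv]
    calc T (cs.simple k) * T v
        = T (cs.simple k) * (T (cs.simple k) * T (cs.simple k * v)) := by rw [e]
      _ = (T (cs.simple k) * T (cs.simple k)) * T (cs.simple k * v) := by rw [mul_assoc]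
      _ = (T (cs.simple k) * c - T (cs.simple k) + c) * T (cs.simple k * v) := by rw [hTss]
      _ = T (cs.simple k) * (c * T (cs.simple k * v)) - T (cs.simple k) * T (cs.simple k * v)
            + c * T (cs.simple k * v) := by rw [add_mul, sub_mul, mul_assoc]
      _ = c * T v - T v + c * T (cs.simple k * v) := by
            rw [e, ← mul_assoc, ← Algebra.commutes (uA ^ 2) (T (cs.simple k)), ← hc,
              mul_assoc, e]
  have e1 : T (cs.simple i) * T x = T (cs.simple i * x) := hTsl i x h1
  have e2 : T x * T (cs.simple j) = T (x * cs.simple j) := hTsr j x h2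
  have e3 : T (cs.simple i * x) * T (cs.simple j)
      = T (cs.simple i * x) * c - T (cs.simple i * x) + T (cs.simple i * x * cs.simple j) * c :=
    hTdr (cs.simple i * x) j (by omega)
  have e4 : T (cs.simple i) * T (x * cs.simple j)
      = c * T (x * cs.simple j) - T (x * cs.simple j)
          + c * T (cs.simple i * (x * cs.simple j)) :=
    hTdl (x * cs.simple j) i (by rw [← mul_assoc]; omega)
  have assoc : T (cs.simple i * x) * c - T (cs.simple i * x)
      = c * T (x * cs.simple j) - T (x * cs.simple j) := by
    have h5 : T (cs.simple i * x) * c - T (cs.simple i * x) + T (cs.simple i * x * cs.simple j) * c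
        = c * T (x * cs.simple j) - T (x * cs.simple j)
          + c * T (cs.simple i * (x * cs.simple j)) := by
      rw [← e3, ← e4, ← e1, ← e2, mul_assoc]
    rw [← mul_assoc] at h5
    rw [← Algebra.commutes (uA ^ 2) (T (cs.simple i * x * cs.simple j)), ← hc] at h5
    exact add_right_cancel h5
  rw [← Algebra.commutes (uA ^ 2) (T (cs.simple i * x)), ← hc] at assoc
  have hsm : (uA ^ 2 - 1 : HeckeA) • T (cs.simple i * x)
      = (uA ^ 2 - 1 : HeckeA) • T (x * cs.simple j) := by
    rw [sub_smul, sub_smul, one_smul, one_smul, Algebra.smul_def, Algebra.smul_def, ← hc]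
    exact assoc
  by_contra hne2
  obtain ⟨b, hb⟩ := hTbasis
  rw [← hb, ← hb] at hsm
  have h7 := congrArg b.repr hsm
  rw [map_smul, map_smul, b.repr_self, b.repr_self] at h7
  have h6 := DFunLike.congr_fun h7 (cs.simple i * x)
  rw [Finsupp.smul_apply, Finsupp.smul_apply, Finsupp.single_apply, Finsupp.single_apply] at h6
  rw [if_pos rfl, if_neg (fun h : x * cs.simple j = cs.simple i * x => hne2 h.symm),
    smul_eq_mul, smul_eq_mul, mul_one, mul_zero] at h6
  exact hne h6


theorem statement13 {B W : Type} [Group W] {Mx : CoxeterMatrix B} (cs : CoxeterSystem Mx W)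
    -- the automorphism `*` of `W`, with square 1, leaving `S` stable
    (star : W ≃* W) (hstar2 : ∀ w : W, star (star w) = w)
    (hstarS : ∀ i : B, ∃ j : B, star (cs.simple i) = cs.simple j)
    -- the Iwahori-Hecke algebra `H` of `(W,S)` over `A`, with basis `T w`
    (H : Type) [Ring H] [Algebra HeckeA H] (T : W → H)
    (hTbasis : ∃ bT : Module.Basis W HeckeA H, ∀ w : W, bT w = T w)
    (hT1 : T 1 = 1)
    (hTmul : ∀ w w' : W, cs.length (w * w') = cs.length w + cs.length w' →
      T w * T w' = T (w * w'))
    (hTquad : ∀ i : B, (T (cs.simple i) + 1) *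
      (T (cs.simple i) - algebraMap HeckeA H (uA ^ 2)) = 0)
    -- the free `A`-module `M` with basis `{a_w : w ∈ I_*}`
    (M : Type) [AddCommGroup M] [Module HeckeA M] (a : W → M)
    (haBasis : ∃ bA : Module.Basis {w : W // (star w)⁻¹ = w} HeckeA M, ∀ w, bA w = a w.1)
    -- the `H`-module structure on `M` of Theorem 0.1
    (act : H →ₐ[HeckeA] Module.End HeckeA M)
    (hact : ∀ (i : B) (w : W), (star w)⁻¹ = w →
      ((cs.simple i * w = w * star (cs.simple i) ∧
          cs.length w < cs.length (cs.simple i * w) →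
        act (T (cs.simple i)) (a w) = uA • a w + (uA + 1) • a (cs.simple i * w)) ∧
      (cs.simple i * w = w * star (cs.simple i) ∧
          cs.length (cs.simple i * w) < cs.length w →
        act (T (cs.simple i)) (a w) =
          (uA ^ 2 - uA - 1) • a w + (uA ^ 2 - uA) • a (cs.simple i * w)) ∧
      (cs.simple i * w ≠ w * star (cs.simple i) ∧
          cs.length w < cs.length (cs.simple i * w) →
        act (T (cs.simple i)) (a w) = a (cs.simple i * w * star (cs.simple i))) ∧
      (cs.simple i * w ≠ w * star (cs.simple i) ∧
          cs.length (cs.simple i * w) < cs.length w →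
        act (T (cs.simple i)) (a w) =
          (uA ^ 2 - 1) • a w + (uA ^ 2) • a (cs.simple i * w * star (cs.simple i)))))
    -- the function `φ` of Proposition 4.5(a)
    (phi : W → ℕ) (hphi1 : phi 1 = 0)
    (hphi : ∀ (i : B) (w : W), (star w)⁻¹ = w →
      cs.length (cs.simple i * w) < cs.length w →
      (cs.simple i * w = w * star (cs.simple i) → phi w = phi (cs.simple i * w) + 1) ∧
      (cs.simple i * w ≠ w * star (cs.simple i) →
        phi w = phi (cs.simple i * w * star (cs.simple i))))
    -- `ℚ(u)` as an `A`-module: the embedding `A = ℤ[u,u⁻¹] → ℚ(u)`, `u ↦ X`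
    (phiA : HeckeA →+* RatFunc ℚ) (hphiA : phiA uA = RatFunc.X)
    -- the `A`-linear map `ζ : M → ℚ(u)` with `ζ(a_w) = u^{l(w)}((u−1)/(u+1))^{φ(w)}`
    (zeta : M →+ RatFunc ℚ)
    (hzetalin : ∀ (c : HeckeA) (m : M), zeta (c • m) = phiA c * zeta m)
    (hzetaval : ∀ w : W, (star w)⁻¹ = w →
      zeta (a w) = RatFunc.X ^ cs.length w *
        ((RatFunc.X - 1) / (RatFunc.X + 1)) ^ phi w) :
    ∀ (x : W) (m : M), zeta (act (T x) m) = RatFunc.X ^ (2 * cs.length x) * zeta m := by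
  classical
  have hX1 : (RatFunc.X + 1 : RatFunc ℚ) ≠ 0 := ratX_add_one_ne_zero
  have hne : (uA ^ 2 - 1 : HeckeA) ≠ 0 := by
    intro h
    have h2 : (RatFunc.X ^ 2 - 1 : RatFunc ℚ) = 0 := by
      have := congrArg phiA h
      simpa [map_sub, map_pow, map_one, hphiA] using this
    have h3 : (RatFunc.X - 1) * (RatFunc.X + 1) = (0 : RatFunc ℚ) := by rw [← h2]; ring
    rcases mul_eq_zero.mp h3 with h | h
    · exact ratX_sub_one_ne_zero h
    · exact hX1 h
  -- star preserves length
  have hstar_len : ∀ v : W, cs.length (star v) = cs.length v := by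
    have key : ∀ v : W, cs.length (star v) ≤ cs.length v := by
      intro v
      obtain ⟨ω, hlen, hv⟩ := cs.exists_reduced_word v
      have hword : ∀ ω' : List B,
          star (cs.wordProd ω') = cs.wordProd (ω'.map (fun k => (hstarS k).choose)) := by
        intro ω'
        induction ω' with
        | nil => simp
        | cons k tail ih =>
          rw [cs.wordProd_cons, map_mul, ih, List.map_cons, cs.wordProd_cons]
          exact congrArg
            (· * cs.wordProd (List.map (fun k => (hstarS k).choose) tail))
            ((hstarS k).choose_spec)
      calc cs.length (star v) = cs.length (cs.wordProd (ω.map (fun k => (hstarS k).choose))) := by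
            rw [hv, hword]
        _ ≤ (ω.map (fun k => (hstarS k).choose)).length := cs.length_wordProd_le _
        _ = ω.length := List.length_map _
        _ = cs.length v := by rw [hv]; exact hlen.symm
    intro v
    refine le_antisymm (key v) ?_
    calc cs.length v = cs.length (star (star v)) := by rw [hstar2]
      _ ≤ cs.length (star v) := key (star v)
  have hlws : ∀ (i : B) (w : W), (star w)⁻¹ = w →
      cs.length (w * star (cs.simple i)) = cs.length (cs.simple i * w) := by
    intro i w hw
    have hws : star w = w⁻¹ := by rw [← inv_inv (star w), hw]
    calc cs.length (w * star (cs.simple i))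
        = cs.length (star (w * star (cs.simple i))) := (hstar_len _).symm
      _ = cs.length (star w * cs.simple i) := by rw [map_mul, hstar2]
      _ = cs.length ((w⁻¹ * cs.simple i)⁻¹) := by rw [hws, cs.length_inv]
      _ = cs.length (cs.simple i * w) := by rw [mul_inv_rev, inv_inv, cs.inv_simple]
  have hmem1 : ∀ (i : B) (w : W), (star w)⁻¹ = w → cs.simple i * w = w * star (cs.simple i) →
      (star (cs.simple i * w))⁻¹ = cs.simple i * w := by
    intro i w hw hcomm
    have hws : star w = w⁻¹ := by rw [← inv_inv (star w), hw]
    obtain ⟨j, hj⟩ := hstarS i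
    rw [map_mul, hws, mul_inv_rev, inv_inv, hj, cs.inv_simple, ← hj, ← hcomm]
  have hmem2 : ∀ (i : B) (w : W), (star w)⁻¹ = w →
      (star (cs.simple i * w * star (cs.simple i)))⁻¹ = cs.simple i * w * star (cs.simple i) := by
    intro i w hw
    have hws : star w = w⁻¹ := by rw [← inv_inv (star w), hw]
    obtain ⟨j, hj⟩ := hstarS i
    rw [map_mul, map_mul, hws, hstar2, hj]
    simp [mul_inv_rev, cs.inv_simple, mul_assoc]
  -- key single-generator computation
  have key : ∀ (i : B) (w : W), (star w)⁻¹ = w →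
      zeta (act (T (cs.simple i)) (a w)) = RatFunc.X ^ 2 * zeta (a w) := by
    intro i w hw
    obtain ⟨j, hj⟩ := hstarS i
    obtain ⟨h1, h2, h3, h4⟩ := hact i w hw
    have hlw := hlws i w hw
    rcases cs.length_simple_mul w i with hlen | hlen
    · by_cases hcomm : cs.simple i * w = w * star (cs.simple i)
      · -- Case 1: ascent, commuting
        have hmem := hmem1 i w hw hcomm
        have hphi1' : phi (cs.simple i * w) = phi w + 1 := by
          have hdec := hphi i (cs.simple i * w) hmem
            (by rw [cs.simple_mul_simple_cancel_left]; omega)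
          have hcomm' : cs.simple i * (cs.simple i * w)
              = (cs.simple i * w) * star (cs.simple i) := by
            rw [cs.simple_mul_simple_cancel_left, hcomm, hj, cs.simple_mul_simple_cancel_right]
          have hph := hdec.1 hcomm'
          rw [hph, cs.simple_mul_simple_cancel_left]
        rw [h1 ⟨hcomm, by omega⟩, map_add, hzetalin, hzetalin, hphiA, map_add, map_one, hphiA,
          hzetaval w hw, hzetaval _ hmem, hlen, hphi1', div_pow, div_pow]
        field_simp
        ring
      · -- Case 3: ascent, non-commuting
        have hmem := hmem2 i w hw
        have hl3 : cs.length (cs.simple i * w * star (cs.simple i)) = cs.length w + 2 := by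
          rcases cs.length_mul_simple (cs.simple i * w) j with h | h
          · rw [hj]; omega
          · exfalso
            apply hcomm
            have heq := auxLift cs H T hTbasis hTmul hTquad hne i j w hlen
              (by rw [← hj, hlw]; omega) (by omega)
            rw [hj]; exact heq
        have hphi3 : phi (cs.simple i * w * star (cs.simple i)) = phi w := by
          have hsv : cs.simple i * (cs.simple i * w * star (cs.simple i))
              = w * star (cs.simple i) := by
            rw [← mul_assoc, cs.simple_mul_simple_cancel_left]
          have hdec : cs.length (cs.simple i * (cs.simple i * w * star (cs.simple i)))
              < cs.length (cs.simple i * w * star (cs.simple i)) := by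
            rw [hsv, hlw]; omega
          have hnc : cs.simple i * (cs.simple i * w * star (cs.simple i))
              ≠ (cs.simple i * w * star (cs.simple i)) * star (cs.simple i) := by
            intro hE
            apply hcomm
            have hvt : (cs.simple i * w * star (cs.simple i)) * star (cs.simple i)
                = cs.simple i * w := by
              rw [hj]; exact cs.simple_mul_simple_cancel_right j
            calc cs.simple i * w = (cs.simple i * w * star (cs.simple i)) * star (cs.simple i) :=
                  hvt.symm
              _ = cs.simple i * (cs.simple i * w * star (cs.simple i)) := hE.symm
              _ = w * star (cs.simple i) := hsv
          have hph := (hphi i (cs.simple i * w * star (cs.simple i)) hmem hdec).2 hnc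
          rw [hph, hsv, hj, cs.simple_mul_simple_cancel_right]
        rw [h3 ⟨hcomm, by omega⟩, hzetaval _ hmem, hzetaval w hw, hl3, hphi3, pow_add]
        ring
    · by_cases hcomm : cs.simple i * w = w * star (cs.simple i)
      · -- Case 2: descent, commuting
        have hmem := hmem1 i w hw hcomm
        have hl2 : cs.length w = cs.length (cs.simple i * w) + 1 := by omega
        have hphi2' : phi w = phi (cs.simple i * w) + 1 := (hphi i w hw (by omega)).1 hcomm
        have e1 : phiA (uA ^ 2 - uA - 1) = RatFunc.X ^ 2 - RatFunc.X - 1 := by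
          simp [map_sub, map_pow, map_one, hphiA]
        have e2 : phiA (uA ^ 2 - uA) = RatFunc.X ^ 2 - RatFunc.X := by
          simp [map_sub, map_pow, hphiA]
        rw [h2 ⟨hcomm, by omega⟩, map_add, hzetalin, hzetalin, e1, e2, hzetaval w hw,
          hzetaval _ hmem, hl2, hphi2', div_pow, div_pow]
        field_simp
        ring
      · -- Case 4: descent, non-commuting
        have hmem := hmem2 i w hw
        have hl4 : cs.length (cs.simple i * w * star (cs.simple i)) + 2 = cs.length w := by
          rcases cs.length_mul_simple (cs.simple i * w) j with h | h
          · exfalso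
            apply hcomm
            have h1' : cs.length (cs.simple i * (cs.simple i * w))
                = cs.length (cs.simple i * w) + 1 := by
              rw [cs.simple_mul_simple_cancel_left]; omega
            have h3' : cs.length (cs.simple i * (cs.simple i * w) * cs.simple j)
                = cs.length (cs.simple i * w) := by
              rw [cs.simple_mul_simple_cancel_left, ← hj]; exact hlw
            have heq := auxLift cs H T hTbasis hTmul hTquad hne i j (cs.simple i * w) h1' h h3'
            rw [cs.simple_mul_simple_cancel_left] at heq
            have h8 := congrArg (· * cs.simple j) heq
            rw [cs.simple_mul_simple_cancel_right] at h8
            rw [hj]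
            exact h8.symm
          · rw [hj]; omega
        have hphi4 : phi w = phi (cs.simple i * w * star (cs.simple i)) :=
          (hphi i w hw (by omega)).2 hcomm
        have e1 : phiA (uA ^ 2 - 1) = RatFunc.X ^ 2 - 1 := by
          simp [map_sub, map_pow, map_one, hphiA]
        have e2 : phiA (uA ^ 2) = RatFunc.X ^ 2 := by
          simp [map_pow, hphiA]
        rw [h4 ⟨hcomm, by omega⟩, map_add, hzetalin, hzetalin, e1, e2, hzetaval w hw,
          hzetaval _ hmem, ← hl4, hphi4, pow_add]
        ring
  -- extend to all of M
  have keyM : ∀ (i : B) (m : M), zeta (act (T (cs.simple i)) m) = RatFunc.X ^ 2 * zeta m := by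
    intro i m
    obtain ⟨bA, hbA⟩ := haBasis
    have hm : m ∈ Submodule.span HeckeA (Set.range bA) := by rw [bA.span_eq]; trivial
    refine Submodule.span_induction ?_ ?_ ?_ ?_ hm
    · rintro x ⟨⟨w, hw⟩, rfl⟩
      rw [hbA]
      exact key i w hw
    · simp
    · intro x y hx hy px py
      rw [map_add, map_add, map_add, px, py]
      ring
    · intro r x hx px
      rw [map_smul, hzetalin, hzetalin, px]
      ring
  -- induction on reduced words
  have main : ∀ (ω : List B), cs.IsReduced ω → ∀ m : M,
      zeta (act (T (cs.wordProd ω)) m) = RatFunc.X ^ (2 * ω.length) * zeta m := by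
    intro ω
    induction ω with
    | nil =>
      intro _ m
      rw [cs.wordProd_nil, hT1, map_one]
      simp
    | cons k tail ih =>
      intro hred m
      have htail : cs.IsReduced tail := by
        have h := hred.drop 1
        simpa using h
      have hlenred : cs.length (cs.wordProd (k :: tail)) = tail.length + 1 := by
        have h : cs.length (cs.wordProd (k :: tail)) = (k :: tail).length := hred
        rw [h]; simp
      have htaillen : cs.length (cs.wordProd tail) = tail.length := htail
      have hmul : T (cs.simple k) * T (cs.wordProd tail) = T (cs.wordProd (k :: tail)) := by
        rw [cs.wordProd_cons]
        apply hTmul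
        rw [cs.length_simple, htaillen, ← cs.wordProd_cons]
        omega
      rw [← hmul, map_mul, Module.End.mul_apply, keyM, ih htail m, List.length_cons]
      rw [show 2 * (tail.length + 1) = 2 + 2 * tail.length by ring, pow_add]
      ring
  intro x m
  obtain ⟨ω, hred, rfl⟩ := cs.exists_reduced_word' x
  have hx : cs.length (cs.wordProd ω) = ω.length := hred
  rw [hx]
  exact main ω hred m
end
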